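/- arXiv:1201.2376 — 5 statements merged into one kernel-verified Lean document; each statement's English description precedes it below -/
import Mathlib

section
/- Let n>2 be an integer. There exists s>0 such that for every r∈(0,1/32) there exists δ>0 with the following property: for every f∈Γ_n(ℝ^{n+1}) with ‖f−p‖_{C^1}<δ there exists a C^1 function g:B(c,s)→ℝ with sup_{B(c,s)}|g|≤r and sup_{B(c,s)}|∂g/∂x_i|≤r for i=1,…,n, such that f([0,1]^n)∩(B(c,s)×ℝ)={(x,g(x)) : x∈B(c,s)}. -/
open Set Metric MeasureTheory

noncomputable section

abbrev Euc (m : ℕ) : Type := EuclideanSpace ℝ (Fin m)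

/-- The unit cube `[0,1]^n` in `ℝ^n`. -/
def unitCube (n : ℕ) : Set (Euc n) := {x | ∀ i, x i ∈ Set.Icc (0:ℝ) 1}

/-- The space `Γ_n(X)` of `C^1` surfaces of dimension `n` in `X`. -/
structure GammaN (n : ℕ) (X : Type*) [NormedAddCommGroup X] [NormedSpace ℝ X] where
  toFun : Euc n → X
  contDiff : ContDiff ℝ 1 toFun

/-- The `C^1` norm: max of the sup norm on the cube and the sup norms of the partial
derivatives on the cube. -/
def cNorm {n : ℕ} {X : Type*} [NormedAddCommGroup X] [NormedSpace ℝ X] (f : Euc n → X) : ℝ :=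
  max (⨆ x : unitCube n, ‖f x.1‖)
      (⨆ i : Fin n, ⨆ x : unitCube n, ‖fderiv ℝ f x.1 (EuclideanSpace.single i 1)‖)

/-- Topology on `Γ_n(X)` generated by the `C^1`-norm balls. -/
instance GammaN.topologicalSpace (n : ℕ) (X : Type*) [NormedAddCommGroup X]
    [NormedSpace ℝ X] : TopologicalSpace (GammaN n X) :=
  TopologicalSpace.generateFrom
    {U | ∃ (f : GammaN n X) (ε : ℝ), 0 < ε ∧ U = {g | cNorm (g.toFun - f.toFun) < ε}}

/-- `N ⊆ X` is `Γ_n`-null if for residually many `f ∈ Γ_n(X)` the image of the unit cube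
meets `N` in `n`-dimensional Hausdorff measure zero. -/
def GammaNull (n : ℕ) (X : Type*) [NormedAddCommGroup X] [NormedSpace ℝ X]
    [MeasurableSpace X] [BorelSpace X] (N : Set X) : Prop :=
  IsMeagre {f : GammaN n X | μH[(n:ℝ)] (f.toFun '' unitCube n ∩ N) ≠ 0}

/-- A set is directionally porous if there is `0 < ρ < 1` so that every `x ∈ P` admits a unit
direction `v` with holes `B(x + t v, ρ |t|)` for arbitrarily small `t`. -/
def DirPorous {X : Type*} [NormedAddCommGroup X] [NormedSpace ℝ X] (P : Set X) : Prop :=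
  ∃ ρ : ℝ, 0 < ρ ∧ ρ < 1 ∧ ∀ x ∈ P, ∃ v : X, ‖v‖ = 1 ∧ ∀ δ : ℝ, 0 < δ →
    ∃ t : ℝ, t ≠ 0 ∧ |t| < δ ∧ Metric.ball (x + t • v) (ρ * |t|) ∩ P = ∅

/-- A set is porous if there is `0 < ρ < 1` so that every `x ∈ P` has holes
`B(y, ρ ‖y - x‖)` with `y` arbitrarily close to `x`. -/
def Porous {X : Type*} [NormedAddCommGroup X] (P : Set X) : Prop :=
  ∃ ρ : ℝ, 0 < ρ ∧ ρ < 1 ∧ ∀ x ∈ P, ∀ δ : ℝ, 0 < δ →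
    ∃ y : X, y ≠ x ∧ ‖y - x‖ < δ ∧ Metric.ball y (ρ * ‖y - x‖) ∩ P = ∅

/-- A countable union of directionally porous sets. -/
def SigmaDirPorous {X : Type*} [NormedAddCommGroup X] [NormedSpace ℝ X] (Q : Set X) : Prop :=
  ∃ P : ℕ → Set X, (∀ k, DirPorous (P k)) ∧ Q = ⋃ k, P k

/-- The point `(x, y) ∈ ℝ^{n+1}` over `x ∈ ℝ^n`. -/
def graphPt (n : ℕ) (x : Euc n) (y : ℝ) : Euc (n + 1) :=
  (EuclideanSpace.equiv (Fin (n + 1)) ℝ).symm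
    (fun i => if h : (i : ℕ) < n then x ⟨(i : ℕ), h⟩ else y)

theorem graphPt_contDiff (n : ℕ) : ContDiff ℝ 1 (fun x : Euc n => graphPt n x 0) := by
  have h1 : ContDiff ℝ 1 (fun x : Euc n =>
      (fun i : Fin (n + 1) => if h : (i : ℕ) < n then x ⟨(i : ℕ), h⟩ else (0 : ℝ))) := by
    apply contDiff_pi.2
    intro i
    by_cases h : (i : ℕ) < n
    · simp only [dif_pos h]
      exact (EuclideanSpace.proj (𝕜 := ℝ) (⟨(i : ℕ), h⟩ : Fin n)).contDiff
    · simp only [dif_neg h]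
      exact contDiff_const
  exact ((EuclideanSpace.equiv (Fin (n + 1)) ℝ).symm :
    (Fin (n + 1) → ℝ) ≃L[ℝ] Euc (n + 1)).contDiff.comp h1

/-- The centre `c = (1/2, …, 1/2)` of the unit cube in `ℝ^n`. -/
def cCenter (n : ℕ) : Euc n := (EuclideanSpace.equiv (Fin n) ℝ).symm (fun _ => (1 : ℝ) / 2)

/-- Projection of `ℝ^{n+1}` onto the first `n` coordinates. -/
def projE (n : ℕ) (z : Euc (n + 1)) : Euc n :=
  (EuclideanSpace.equiv (Fin n) ℝ).symm (fun i => z i.castSucc)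

/-- The cylinder `B(c, s) × ℝ ⊆ ℝ^{n+1}`. -/
def cylinder (n : ℕ) (s : ℝ) : Set (Euc (n + 1)) := {z | projE n z ∈ Metric.ball (cCenter n) s}

/-- The flat surface `p(x) = (x, 0)` as an element of `Γ_n(ℝ^{n+1})`. -/
def pFlat (n : ℕ) : GammaN n (Euc (n + 1)) where
  toFun x := graphPt n x 0
  contDiff := graphPt_contDiff n


namespace SurfAux

lemma euc_abs_apply_le_norm {n : ℕ} (v : Euc n) (i : Fin n) : |v i| ≤ ‖v‖ := by
  rw [EuclideanSpace.norm_eq, ← Real.sqrt_sq_eq_abs]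
  apply Real.sqrt_le_sqrt
  have := Finset.single_le_sum (f := fun j => ‖v j‖ ^ 2) (fun j _ => sq_nonneg _)
    (Finset.mem_univ i)
  simpa [Real.norm_eq_abs, sq_abs] using this

lemma piLp_sum_apply {n : ℕ} {ι : Type*} (s : Finset ι) (f : ι → Euc n) (j : Fin n) :
    (∑ i ∈ s, f i) j = ∑ i ∈ s, f i j := by
  induction s using Finset.cons_induction with
  | empty => rfl
  | cons a s ha ih => rw [Finset.sum_cons, Finset.sum_cons, ← ih]; rfl

lemma euc_eq_sum_single {n : ℕ} (v : Euc n) :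
    v = ∑ i, v i • EuclideanSpace.single i (1:ℝ) := by
  ext j
  rw [piLp_sum_apply]
  simp [EuclideanSpace.single_apply]

/-- Operator-norm bound from bounds on basis vectors. -/
lemma clm_bound {n : ℕ} {X : Type*} [NormedAddCommGroup X] [NormedSpace ℝ X]
    (T : Euc n →L[ℝ] X) {a : ℝ} (ha : 0 ≤ a)
    (h : ∀ i, ‖T (EuclideanSpace.single i (1:ℝ))‖ ≤ a) : ‖T‖ ≤ n * a := by
  refine T.opNorm_le_bound (by positivity) (fun v => ?_)
  conv_lhs => rw [euc_eq_sum_single v]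
  rw [map_sum]
  refine (norm_sum_le _ _).trans ?_
  have hb : ∀ i ∈ Finset.univ, ‖T (v i • EuclideanSpace.single i (1:ℝ))‖ ≤ a * ‖v‖ := by
    intro i _
    rw [_root_.map_smul, norm_smul, Real.norm_eq_abs]
    calc |v i| * ‖T (EuclideanSpace.single i (1:ℝ))‖ ≤ ‖v‖ * a :=
      mul_le_mul (euc_abs_apply_le_norm v i) (h i) (norm_nonneg _) (norm_nonneg _)
    _ = a * ‖v‖ := mul_comm _ _
  refine (Finset.sum_le_sum hb).trans ?_
  simp only [Finset.sum_const, Finset.card_univ, Fintype.card_fin, nsmul_eq_mul]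
  rw [mul_assoc]

/-- Projection onto the first `n` coordinates as a continuous linear map. -/
def projL (n : ℕ) : Euc (n+1) →L[ℝ] Euc n :=
  ((EuclideanSpace.equiv (Fin n) ℝ).symm : (Fin n → ℝ) ≃L[ℝ] Euc n).toContinuousLinearMap.comp
    (ContinuousLinearMap.pi (fun i : Fin n => EuclideanSpace.proj (i.castSucc)))

lemma projL_apply {n : ℕ} (z : Euc (n+1)) (j : Fin n) : projL n z j = z j.castSucc := rfl

lemma projE_eq_projL {n : ℕ} (z : Euc (n+1)) : projE n z = projL n z := rfl

/-- Inclusion `x ↦ (x,0)` as a continuous linear map. -/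
def inclL (n : ℕ) : Euc n →L[ℝ] Euc (n+1) :=
  ((EuclideanSpace.equiv (Fin (n+1)) ℝ).symm :
      (Fin (n+1) → ℝ) ≃L[ℝ] Euc (n+1)).toContinuousLinearMap.comp
    (ContinuousLinearMap.pi (fun i : Fin (n+1) =>
      if h : (i : ℕ) < n then EuclideanSpace.proj (⟨(i : ℕ), h⟩ : Fin n) else 0))

lemma inclL_apply {n : ℕ} (x : Euc n) (i : Fin (n+1)) :
    inclL n x i = if h : (i : ℕ) < n then x ⟨(i : ℕ), h⟩ else 0 := by
  show (if h : (i : ℕ) < n then EuclideanSpace.proj (⟨(i : ℕ), h⟩ : Fin n) else 0) x = _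
  split <;> rfl

lemma inclL_eq_graphPt {n : ℕ} (x : Euc n) : inclL n x = graphPt n x 0 := by
  ext i
  rw [inclL_apply]
  rfl

lemma graphPt_apply_castSucc {n : ℕ} (x : Euc n) (y : ℝ) (j : Fin n) :
    graphPt n x y j.castSucc = x j := by
  show (if h : ((j.castSucc : Fin (n+1)) : ℕ) < n then x ⟨_, h⟩ else y) = x j
  rw [dif_pos (by simpa using j.isLt)]
  exact congrArg x (Fin.ext (Fin.coe_castSucc j))

lemma graphPt_apply_last {n : ℕ} (x : Euc n) (y : ℝ) :
    graphPt n x y (Fin.last n) = y := by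
  show (if h : ((Fin.last n : Fin (n+1)) : ℕ) < n then x ⟨_, h⟩ else y) = y
  rw [dif_neg (by simp)]

lemma projL_graphPt {n : ℕ} (x : Euc n) (y : ℝ) : projL n (graphPt n x y) = x := by
  ext j
  rw [projL_apply, graphPt_apply_castSucc]

lemma graphPt_eq_self {n : ℕ} (z : Euc (n+1)) :
    graphPt n (projL n z) (z (Fin.last n)) = z := by
  ext j
  induction j using Fin.lastCases with
  | last => rw [graphPt_apply_last]
  | cast j => rw [graphPt_apply_castSucc, projL_apply]

lemma projL_comp_inclL {n : ℕ} : (projL n).comp (inclL n) = ContinuousLinearMap.id ℝ (Euc n) := by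
  ext x j
  show projL n (inclL n x) j = x j
  rw [inclL_eq_graphPt, projL_graphPt]

lemma norm_projL_le {n : ℕ} (z : Euc (n+1)) : ‖projL n z‖ ≤ ‖z‖ := by
  rw [EuclideanSpace.norm_eq, EuclideanSpace.norm_eq]
  apply Real.sqrt_le_sqrt
  rw [Fin.sum_univ_castSucc]
  have : ∀ j : Fin n, ‖projL n z j‖ ^ 2 = ‖z j.castSucc‖ ^ 2 := fun j => by rw [projL_apply]
  rw [Finset.sum_congr rfl (fun j _ => this j)]
  nlinarith [sq_nonneg ‖z (Fin.last n)‖]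

lemma opNorm_projL_le (n : ℕ) : ‖projL n‖ ≤ 1 :=
  (projL n).opNorm_le_bound zero_le_one (fun z => by rw [one_mul]; exact norm_projL_le z)

lemma cCenter_apply {n : ℕ} (i : Fin n) : cCenter n i = 1 / 2 := rfl

lemma isCompact_unitCube (n : ℕ) : IsCompact (unitCube n) := by
  have : unitCube n =
      (EuclideanSpace.equiv (Fin n) ℝ).toHomeomorph ⁻¹' (Set.univ.pi fun _ => Icc (0:ℝ) 1) := by
    ext x
    simp only [unitCube, Set.mem_preimage, Set.mem_pi, Set.mem_univ, forall_true_left,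
      true_implies, Set.mem_setOf_eq]
    rfl
  rw [this]
  exact (EuclideanSpace.equiv (Fin n) ℝ).toHomeomorph.isCompact_preimage.2
    (isCompact_univ_pi fun _ => isCompact_Icc)

lemma closedBall_subset_unitCube {n : ℕ} : closedBall (cCenter n) 4⁻¹ ⊆ unitCube n := by
  intro z hz i
  have h1 : |z i - 1/2| ≤ 4⁻¹ := by
    have h0 : |(z - cCenter n) i| ≤ ‖z - cCenter n‖ := euc_abs_apply_le_norm _ i
    rw [mem_closedBall, dist_eq_norm] at hz
    have h2 : (z - cCenter n) i = z i - 1/2 := by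
      rw [PiLp.sub_apply, cCenter_apply]
    rw [h2] at h0
    linarith
  rw [abs_le] at h1
  constructor <;> [linarith [h1.1]; linarith [h1.2]]

lemma cCenter_mem_unitCube (n : ℕ) : cCenter n ∈ unitCube n := by
  intro i
  rw [cCenter_apply]
  constructor <;> norm_num

/-- Pointwise bound on the unit cube from a `ciSup` bound, for a continuous function. -/
lemma le_csupr_cube {n : ℕ} {φ : Euc n → ℝ} (hφ : Continuous φ) {x : Euc n}
    (hx : x ∈ unitCube n) : φ x ≤ ⨆ y : unitCube n, φ y.1 := by
  have hb : BddAbove (Set.range fun y : unitCube n => φ y.1) := by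
    have h1 := ((isCompact_unitCube n).image hφ).bddAbove
    have h2 : (Set.range fun y : unitCube n => φ y.1) = φ '' unitCube n := by
      rw [← Set.image_univ, ← Set.image_image (g := φ) (f := fun y : unitCube n => y.1)]
      rw [Subtype.coe_image_univ]
    rwa [h2]
  exact le_ciSup hb ⟨x, hx⟩

end SurfAux

set_option maxHeartbeats 2000000 in
/-- Surfaces `C^1`-close to the flat surface `p(x) = (x, 0)` are graphs of
`C^1` functions with small `C^1` norm over the ball `B(c, s)`, where `c = (1/2, …, 1/2)`. -/
theorem surfaces_near_flat_are_graphs (n : ℕ) (hn : 2 < n) :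
    ∃ s : ℝ, 0 < s ∧ ∀ r : ℝ, 0 < r → r < 1 / 32 → ∃ δ : ℝ, 0 < δ ∧
      ∀ f : GammaN n (Euc (n + 1)), cNorm (f.toFun - (pFlat n).toFun) < δ →
        ∃ g : Euc n → ℝ, ContDiffOn ℝ 1 g (Metric.ball (cCenter n) s) ∧
          (∀ x ∈ Metric.ball (cCenter n) s, |g x| ≤ r) ∧
          (∀ x ∈ Metric.ball (cCenter n) s, ∀ i : Fin n,
            |fderiv ℝ g x (EuclideanSpace.single i 1)| ≤ r) ∧
          f.toFun '' unitCube n ∩ cylinder n s =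
            (fun x => graphPt n x (g x)) '' Metric.ball (cCenter n) s := by
  classical
  open SurfAux in
  refine ⟨8⁻¹, by norm_num, fun r hr hr32 => ?_⟩
  have hnpos : (0:ℝ) < n := by positivity
  set δ : ℝ := r / (4 * n) with hδdef
  have hδpos : 0 < δ := by positivity
  refine ⟨δ, hδpos, fun f hf => ?_⟩
  -- the perturbation h and its bounds
  set h : Euc n → Euc (n+1) := f.toFun - (pFlat n).toFun with hhdef
  have hh : ContDiff ℝ 1 h := f.contDiff.sub (graphPt_contDiff n)
  have hfun : ∀ x, f.toFun x = inclL n x + h x := by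
    intro x
    rw [inclL_eq_graphPt]
    show f.toFun x = graphPt n x 0 + (f.toFun x - (pFlat n).toFun x)
    show f.toFun x = graphPt n x 0 + (f.toFun x - graphPt n x 0)
    abel
  have hB1 : ∀ x ∈ unitCube n, ‖h x‖ < δ := by
    intro x hx
    have h1 : ‖h x‖ ≤ ⨆ y : unitCube n, ‖h y.1‖ :=
      le_csupr_cube (continuous_norm.comp hh.continuous) hx
    calc ‖h x‖ ≤ _ := h1
    _ ≤ cNorm (f.toFun - (pFlat n).toFun) := le_max_left _ _
    _ < δ := hf
  have hB2 : ∀ x ∈ unitCube n, ∀ i : Fin n,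
      ‖fderiv ℝ h x (EuclideanSpace.single i (1:ℝ))‖ < δ := by
    intro x hx i
    have hcont : Continuous fun y => ‖fderiv ℝ h y (EuclideanSpace.single i (1:ℝ))‖ := by
      have h1 : Continuous fun y => fderiv ℝ h y := hh.continuous_fderiv one_ne_zero
      exact (((ContinuousLinearMap.apply ℝ (Euc (n+1))
        (EuclideanSpace.single i (1:ℝ))).continuous).comp h1).norm
    have h1 : ‖fderiv ℝ h x (EuclideanSpace.single i (1:ℝ))‖
        ≤ ⨆ y : unitCube n, ‖fderiv ℝ h y.1 (EuclideanSpace.single i (1:ℝ))‖ :=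
      le_csupr_cube hcont hx
    have h2 : (⨆ y : unitCube n, ‖fderiv ℝ h y.1 (EuclideanSpace.single i (1:ℝ))‖)
        ≤ ⨆ j : Fin n, ⨆ y : unitCube n,
            ‖fderiv ℝ h y.1 (EuclideanSpace.single j (1:ℝ))‖ :=
      le_ciSup (f := fun j : Fin n => ⨆ y : unitCube n,
        ‖fderiv ℝ h y.1 (EuclideanSpace.single j (1:ℝ))‖) (Set.finite_range _).bddAbove i
    calc ‖fderiv ℝ h x (EuclideanSpace.single i (1:ℝ))‖ ≤ _ := h1
    _ ≤ _ := h2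
    _ ≤ cNorm (f.toFun - (pFlat n).toFun) := le_max_right _ _
    _ < δ := hf
  have hδr : (n:ℝ) * δ = r / 4 := by
    field_simp [hδdef]
    rw [hδdef]; field_simp
  have hD : ∀ x ∈ unitCube n, ‖fderiv ℝ h x‖ ≤ r / 4 := by
    intro x hx
    have := clm_bound (fderiv ℝ h x) hδpos.le (fun i => (hB2 x hx i).le)
    rwa [hδr] at this
  have hr4 : r / 4 ≤ 1/2 := by linarith
  have hδsmall : δ ≤ r / 4 := by
    rw [hδdef]
    rw [div_le_div_iff₀ (by positivity) (by norm_num)]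
    have h1 : (1:ℝ) ≤ n := by exact_mod_cast hn.le.trans' (by norm_num)
    nlinarith
  -- the horizontal map F and its properties
  set C : Euc n := cCenter n with hCdef
  set F : Euc n → Euc n := fun x => projL n (f.toFun x) with hFdef
  have hFc : ContDiff ℝ 1 F := (projL n).contDiff.comp f.contDiff
  have hFsub : ∀ x, F x - x = projL n (h x) := by
    intro x
    have : F x = x + projL n (h x) := by
      rw [hFdef]
      simp only
      rw [hfun x, map_add]
      congr 1
      rw [inclL_eq_graphPt, projL_graphPt]
    rw [this]; abel
  have hFnear : ∀ x ∈ unitCube n, ‖F x - x‖ ≤ δ := by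
    intro x hx
    rw [hFsub]
    exact (norm_projL_le _).trans (hB1 x hx).le
  haveI : NeZero n := ⟨by omega⟩
  have hballsub : closedBall C (4⁻¹:ℝ) ⊆ unitCube n := closedBall_subset_unitCube
  -- F approximates the identity on the closed ball
  have hrNN : (Real.toNNReal (r/4) : ℝ) = r / 4 := Real.coe_toNNReal _ (by positivity)
  have apx : ApproximatesLinearOn F
      ((ContinuousLinearEquiv.refl ℝ (Euc n) : Euc n ≃L[ℝ] Euc n) : Euc n →L[ℝ] Euc n)
      (closedBall C 4⁻¹) (Real.toNNReal (r/4)) := by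
    intro x hx y hy
    have hdiff : F x - F y - (ContinuousLinearEquiv.refl ℝ (Euc n) : Euc n →L[ℝ] Euc n) (x - y)
        = projL n (h x) - projL n (h y) := by
      have hid : ((ContinuousLinearEquiv.refl ℝ (Euc n) : Euc n ≃L[ℝ] Euc n) :
          Euc n →L[ℝ] Euc n) (x - y) = x - y := rfl
      rw [hid]
      have e1 := hFsub x
      have e2 := hFsub y
      have e3 : F x - F y - (x - y) = (F x - x) - (F y - y) := by abel
      rw [e3, e1, e2]
    rw [hdiff, ← map_sub]
    have hle : ‖projL n (h x - h y)‖ ≤ ‖h x - h y‖ := norm_projL_le _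
    have hmvt : ‖h x - h y‖ ≤ r/4 * ‖x - y‖ := by
      have := (convex_closedBall C (4⁻¹:ℝ)).norm_image_sub_le_of_norm_fderiv_le
        (f := h) (C := r/4)
        (fun z hz => (hh.differentiable one_ne_zero).differentiableAt)
        (fun z hz => hD z (hballsub hz)) hy hx
      simpa using this
    rw [hrNN]
    exact hle.trans hmvt
  have hNval : ‖(((ContinuousLinearEquiv.refl ℝ (Euc n)).symm :
      Euc n ≃L[ℝ] Euc n) : Euc n →L[ℝ] Euc n)‖₊ = 1 := by
    rw [ContinuousLinearEquiv.refl_symm, ContinuousLinearEquiv.coe_refl]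
    ext
    push_cast
    exact ContinuousLinearMap.norm_id
  have hcond : Subsingleton (Euc n) ∨ Real.toNNReal (r/4)
      < (‖(((ContinuousLinearEquiv.refl ℝ (Euc n)).symm :
        Euc n ≃L[ℝ] Euc n) : Euc n →L[ℝ] Euc n)‖₊)⁻¹ := by
    right
    rw [hNval, inv_one, ← NNReal.coe_lt_coe, hrNN, NNReal.coe_one]
    linarith
  have hinj : InjOn F (closedBall C 4⁻¹) := apx.injOn hcond
  have hsurj := apx.surjOn_closedBall_of_nonlinearRightInverse
    (ContinuousLinearEquiv.refl ℝ (Euc n)).toNonlinearRightInverse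
    (ε := (4⁻¹:ℝ)) (b := C) (by norm_num) subset_rfl
  have hFC : ‖F C - C‖ ≤ δ := hFnear C (cCenter_mem_unitCube n)
  have hδ8 : δ < 1/128 := lt_of_le_of_lt hδsmall (by linarith)
  have hsurj' : SurjOn F (closedBall C 4⁻¹) (ball C 8⁻¹) := by
    refine SurjOn.mono subset_rfl ?_ hsurj
    intro x hx
    have h0 : (ContinuousLinearEquiv.refl ℝ (Euc n)).toNonlinearRightInverse.nnnorm = 1 := hNval
    have h1 : (((ContinuousLinearEquiv.refl ℝ
        (Euc n)).toNonlinearRightInverse.nnnorm) : ℝ) = 1 := by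
      rw [h0, NNReal.coe_one]
    rw [mem_closedBall]
    have h2 : dist x (F C) ≤ dist x C + dist C (F C) := dist_triangle _ _ _
    have h3 : dist C (F C) ≤ δ := by
      rw [dist_eq_norm, norm_sub_rev]
      exact hFC
    have h4 : dist x C < 8⁻¹ := mem_ball.1 hx
    have h5 : ((((ContinuousLinearEquiv.refl ℝ
        (Euc n)).toNonlinearRightInverse.nnnorm) : ℝ))⁻¹ -
        ((Real.toNNReal (r/4)) : ℝ) = 1 - r/4 := by
      rw [h1, hrNN, inv_one]
    have h6 : dist x (F C) < 8⁻¹ + δ := by linarith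
    refine h6.le.trans ?_
    rw [h5]
    nlinarith
  -- the local section invF of F and the graph function g
  set invF : Euc n → Euc n := fun x =>
    if hx : ∃ z ∈ closedBall C (4⁻¹:ℝ), F z = x then hx.choose else C with hinvFdef
  have hinvF : ∀ x ∈ ball C (8⁻¹:ℝ), invF x ∈ closedBall C (4⁻¹:ℝ) ∧ F (invF x) = x := by
    intro x hx
    obtain ⟨z, hz, hFz⟩ := hsurj' hx
    have hex : ∃ z ∈ closedBall C (4⁻¹:ℝ), F z = x := ⟨z, hz, hFz⟩
    rw [hinvFdef]
    simp only [dif_pos hex]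
    exact ⟨hex.choose_spec.1, hex.choose_spec.2⟩
  set g : Euc n → ℝ := fun x => f.toFun (invF x) (Fin.last n) with hgdef
  -- z-values are close to the centre
  have hinvF_near : ∀ x ∈ ball C (8⁻¹:ℝ), ‖invF x - C‖ < 3/16 := by
    intro x hx
    obtain ⟨hz1, hz2⟩ := hinvF x hx
    have h1 : ‖invF x - F (invF x)‖ ≤ δ := by
      rw [norm_sub_rev]
      exact hFnear _ (hballsub hz1)
    have h2 : ‖invF x - C‖ ≤ ‖invF x - F (invF x)‖ + ‖F (invF x) - C‖ := by
      have : invF x - C = (invF x - F (invF x)) + (F (invF x) - C) := by abel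
      rw [this]
      exact norm_add_le _ _
    have h3 : ‖F (invF x) - C‖ < 8⁻¹ := by
      rw [hz2, ← dist_eq_norm]
      exact mem_ball.1 hx
    have := hδ8
    linarith
  -- the graph identity over the ball
  have hgraph : ∀ x ∈ ball C (8⁻¹:ℝ), graphPt n x (g x) = f.toFun (invF x) := by
    intro x hx
    obtain ⟨hz1, hz2⟩ := hinvF x hx
    have h1 : projL n (f.toFun (invF x)) = x := hz2
    calc graphPt n x (g x)
        = graphPt n (projL n (f.toFun (invF x))) (f.toFun (invF x) (Fin.last n)) := by
          rw [h1]
    _ = f.toFun (invF x) := graphPt_eq_self _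
  -- sup-norm bound for g
  have hgbound : ∀ x ∈ ball C (8⁻¹:ℝ), |g x| ≤ r := by
    intro x hx
    obtain ⟨hz1, hz2⟩ := hinvF x hx
    have h1 : g x = h (invF x) (Fin.last n) := by
      rw [hgdef]
      simp only
      rw [hfun (invF x)]
      have : inclL n (invF x) (Fin.last n) = 0 := by
        rw [inclL_eq_graphPt, graphPt_apply_last]
      rw [PiLp.add_apply, this, zero_add]
    rw [h1]
    have h2 : |h (invF x) (Fin.last n)| ≤ ‖h (invF x)‖ := euc_abs_apply_le_norm _ _
    have h3 : ‖h (invF x)‖ < δ := hB1 _ (hballsub hz1)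
    have h4 : δ ≤ r := hδsmall.trans (by linarith)
    linarith
  -- local analysis: smoothness and derivative bounds for g
  have hloc : ∀ x₀ ∈ ball C (8⁻¹:ℝ), ContDiffAt ℝ 1 g x₀ ∧
      ∀ i : Fin n, |fderiv ℝ g x₀ (EuclideanSpace.single i 1)| ≤ r := by
    intro x₀ hx₀
    obtain ⟨hz₀ball, hFz₀⟩ := hinvF x₀ hx₀
    set z₀ : Euc n := invF x₀ with hz₀def
    have hdh : HasFDerivAt h (fderiv ℝ h z₀) z₀ := (hh.differentiable one_ne_zero z₀).hasFDerivAt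
    have hfd : HasFDerivAt f.toFun (inclL n + fderiv ℝ h z₀) z₀ := by
      have h1 : HasFDerivAt (fun x => inclL n x + h x) (inclL n + fderiv ℝ h z₀) z₀ :=
        ((inclL n).hasFDerivAt).add hdh
      exact h1.congr_of_eventuallyEq (Filter.Eventually.of_forall fun x => hfun x)
    set E₀ : Euc n →L[ℝ] Euc n := (projL n).comp (fderiv ℝ h z₀) with hE₀def
    have hE₀ : ‖E₀‖ ≤ r/4 := by
      calc ‖E₀‖ ≤ ‖projL n‖ * ‖fderiv ℝ h z₀‖ := ContinuousLinearMap.opNorm_comp_le _ _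
      _ ≤ 1 * (r/4) := mul_le_mul (opNorm_projL_le n) (hD z₀ (hballsub hz₀ball))
          (norm_nonneg _) zero_le_one
      _ = r/4 := one_mul _
    have hE₀1 : ‖-E₀‖ < 1 := by rw [norm_neg]; linarith
    set u : (Euc n →L[ℝ] Euc n)ˣ := Units.oneSub (-E₀) hE₀1 with hudef
    set eqv : Euc n ≃L[ℝ] Euc n := ContinuousLinearEquiv.unitsEquiv ℝ (Euc n) u with heqvdef
    have hcoe : (eqv : Euc n →L[ℝ] Euc n) = ContinuousLinearMap.id ℝ (Euc n) + E₀ := by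
      have h1 : (eqv : Euc n →L[ℝ] Euc n) = (1 : Euc n →L[ℝ] Euc n) - (-E₀) := rfl
      rw [h1, sub_neg_eq_add, ContinuousLinearMap.one_def]
    have hDF : HasFDerivAt F ((eqv : Euc n →L[ℝ] Euc n)) z₀ := by
      have h1 : HasFDerivAt F ((projL n).comp (inclL n + fderiv ℝ h z₀)) z₀ :=
        (projL n).hasFDerivAt.comp z₀ hfd
      have h2 : (projL n).comp (inclL n + fderiv ℝ h z₀) = (eqv : Euc n →L[ℝ] Euc n) := by
        rw [ContinuousLinearMap.comp_add, projL_comp_inclL, hcoe]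
      rwa [h2] at h1
    have hst : HasStrictFDerivAt F ((eqv : Euc n →L[ℝ] Euc n)) z₀ :=
      hFc.contDiffAt.hasStrictFDerivAt' hDF one_ne_zero
    set linv : Euc n → Euc n := hst.localInverse F eqv z₀ with hlinvdef
    have hlinv_at : linv x₀ = z₀ := by
      have := hst.localInverse_apply_image
      rwa [hFz₀] at this
    have hlinv_cd : ContDiffAt ℝ 1 linv x₀ := by
      have h1 := hFc.contDiffAt.to_localInverse (f' := eqv) hDF one_ne_zero
      rw [hFz₀] at h1
      exact h1
    have hright : ∀ᶠ y in nhds x₀, F (linv y) = y := by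
      have := hst.eventually_right_inverse
      rwa [hFz₀] at this
    have hlinv_ct : ContinuousAt linv x₀ := by
      have := hst.localInverse_continuousAt
      rwa [hFz₀] at this
    have hEq : invF =ᶠ[nhds x₀] linv := by
      have ev1 : ∀ᶠ x in nhds x₀, x ∈ ball C (8⁻¹:ℝ) := isOpen_ball.eventually_mem hx₀
      have ev3 : ∀ᶠ x in nhds x₀, linv x ∈ ball C (4⁻¹:ℝ) := by
        refine hlinv_ct.eventually_mem (isOpen_ball.mem_nhds ?_)
        rw [hlinv_at, mem_ball, dist_eq_norm]
        have := hinvF_near x₀ hx₀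
        calc ‖z₀ - C‖ < 3/16 := this
        _ < 4⁻¹ := by norm_num
      filter_upwards [ev1, hright, ev3] with x h1 h2 h3
      obtain ⟨hb1, hb2⟩ := hinvF x h1
      exact hinj hb1 (ball_subset_closedBall h3) (by rw [hb2, h2])
    have hgeq : g =ᶠ[nhds x₀] fun x =>
        (EuclideanSpace.proj (Fin.last n) : Euc (n+1) →L[ℝ] ℝ) (f.toFun (linv x)) := by
      filter_upwards [hEq] with x hx
      rw [hgdef]
      simp only
      rw [hx]
      rfl
    have hgc : ContDiffAt ℝ 1 g x₀ := by
      have hout : ContDiffAt ℝ 1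
          ((EuclideanSpace.proj (Fin.last n) : Euc (n+1) →L[ℝ] ℝ) ∘ f.toFun) (linv x₀) :=
        ((EuclideanSpace.proj (Fin.last n)).contDiff.comp f.contDiff).contDiffAt
      have h1 := hout.comp x₀ hlinv_cd
      exact ContDiffAt.congr_of_eventuallyEq h1 hgeq
    refine ⟨hgc, fun i => ?_⟩
    have hlinv_d : HasFDerivAt linv ((eqv.symm : Euc n →L[ℝ] Euc n)) x₀ := by
      have := hst.to_localInverse.hasFDerivAt
      rwa [hFz₀] at this
    have houter_d : HasFDerivAt (fun z : Euc n =>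
        (EuclideanSpace.proj (Fin.last n) : Euc (n+1) →L[ℝ] ℝ) (f.toFun z))
        ((EuclideanSpace.proj (Fin.last n)).comp (inclL n + fderiv ℝ h z₀)) (linv x₀) := by
      rw [hlinv_at]
      exact (EuclideanSpace.proj (Fin.last n)).hasFDerivAt.comp z₀ hfd
    have hcomp : HasFDerivAt (fun x =>
        (EuclideanSpace.proj (Fin.last n) : Euc (n+1) →L[ℝ] ℝ) (f.toFun (linv x)))
        (((EuclideanSpace.proj (Fin.last n)).comp (inclL n + fderiv ℝ h z₀)).comp
          (eqv.symm : Euc n →L[ℝ] Euc n)) x₀ :=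
      houter_d.comp x₀ hlinv_d
    have hgd : HasFDerivAt g
        (((EuclideanSpace.proj (Fin.last n)).comp (inclL n + fderiv ℝ h z₀)).comp
          (eqv.symm : Euc n →L[ℝ] Euc n)) x₀ :=
      hcomp.congr_of_eventuallyEq hgeq
    rw [hgd.fderiv]
    set w : Euc n := (eqv.symm : Euc n →L[ℝ] Euc n) (EuclideanSpace.single i 1) with hwdef
    have hww : (eqv : Euc n →L[ℝ] Euc n) w = EuclideanSpace.single i 1 := by
      show eqv ((eqv.symm : Euc n →L[ℝ] Euc n) (EuclideanSpace.single i 1)) = _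
      exact eqv.apply_symm_apply _
    have hwnorm : ‖w‖ ≤ 2 := by
      have h1 : w + E₀ w = EuclideanSpace.single i 1 := by
        rw [← hww, hcoe]
        rfl
      have h2 : w = EuclideanSpace.single i 1 - E₀ w := by
        rw [← h1]; abel
      have h3 : ‖w‖ ≤ ‖(EuclideanSpace.single i (1:ℝ))‖ + ‖E₀ w‖ := by
        conv_lhs => rw [h2]
        exact norm_sub_le _ _
      have h4 : ‖(EuclideanSpace.single i (1:ℝ))‖ = 1 := by
        rw [EuclideanSpace.norm_single]; norm_num
      have h5 : ‖E₀ w‖ ≤ r/4 * ‖w‖ := E₀.le_of_opNorm_le hE₀ w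
      have h6 : r/4 * ‖w‖ ≤ 1/2 * ‖w‖ :=
        mul_le_mul_of_nonneg_right hr4 (norm_nonneg w)
      have := norm_nonneg w
      linarith
    have hval : (((EuclideanSpace.proj (Fin.last n)).comp (inclL n + fderiv ℝ h z₀)).comp
        (eqv.symm : Euc n →L[ℝ] Euc n)) (EuclideanSpace.single i 1)
        = (fderiv ℝ h z₀ w) (Fin.last n) := by
      rw [ContinuousLinearMap.comp_apply, ContinuousLinearMap.comp_apply, ← hwdef,
        ContinuousLinearMap.add_apply]
      show ((inclL n) w + (fderiv ℝ h z₀) w) (Fin.last n) = _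
      rw [PiLp.add_apply, inclL_eq_graphPt, graphPt_apply_last, zero_add]
    rw [hval]
    have h7 : |(fderiv ℝ h z₀ w) (Fin.last n)| ≤ ‖fderiv ℝ h z₀ w‖ :=
      euc_abs_apply_le_norm _ _
    have h8 : ‖fderiv ℝ h z₀ w‖ ≤ r/4 * ‖w‖ :=
      (fderiv ℝ h z₀).le_of_opNorm_le (hD z₀ (hballsub hz₀ball)) w
    have h9 : r/4 * ‖w‖ ≤ r/4 * 2 := by
      apply mul_le_mul_of_nonneg_left hwnorm
      positivity
    calc |(fderiv ℝ h z₀ w) (Fin.last n)| ≤ ‖fderiv ℝ h z₀ w‖ := h7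
    _ ≤ r/4 * ‖w‖ := h8
    _ ≤ r/4 * 2 := h9
    _ ≤ r := by linarith
  -- assemble the result
  refine ⟨g, ?_, hgbound, fun x hx i => (hloc x hx).2 i, ?_⟩
  · intro x hx
    exact ((hloc x hx).1).contDiffWithinAt
  · ext w
    constructor
    · rintro ⟨⟨z, hz, rfl⟩, hcyl⟩
      have hx : F z ∈ ball C (8⁻¹:ℝ) := by
        have : projE n (f.toFun z) ∈ ball (cCenter n) (8⁻¹:ℝ) := hcyl
        rwa [projE_eq_projL] at this
      have hzball : z ∈ closedBall C (4⁻¹:ℝ) := by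
        by_contra hzc
        have h1 : (4⁻¹:ℝ) < ‖z - C‖ := by
          rw [mem_closedBall, dist_eq_norm] at hzc
          linarith [not_le.1 hzc]
        have h2 : ‖F z - z‖ ≤ δ := hFnear z hz
        have h3 : ‖F z - C‖ < 8⁻¹ := by
          rw [← dist_eq_norm]
          exact mem_ball.1 hx
        have h4 : ‖z - C‖ ≤ ‖z - F z‖ + ‖F z - C‖ := by
          have : z - C = (z - F z) + (F z - C) := by abel
          rw [this]; exact norm_add_le _ _
        rw [norm_sub_rev] at h2
        linarith
      obtain ⟨hb1, hb2⟩ := hinvF (F z) hx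
      have hzeq : invF (F z) = z := hinj hb1 hzball hb2
      refine ⟨F z, hx, ?_⟩
      show graphPt n (F z) (g (F z)) = f.toFun z
      rw [hgraph (F z) hx, hzeq]
    · rintro ⟨x, hx, rfl⟩
      obtain ⟨hb1, hb2⟩ := hinvF x hx
      refine ⟨⟨invF x, hballsub hb1, (hgraph x hx).symm⟩, ?_⟩
      show projE n (graphPt n x (g x)) ∈ ball (cCenter n) (8⁻¹:ℝ)
      rw [projE_eq_projL, projL_graphPt]
      exact hx

end
end

section
/- Let n≥1, c∈ℝ^n, s>0, 0<ε<1, r^0>0 and l≥0. Suppose G^1,…,G^l are finite families of open balls in ℝ^n and r^1,…,r^l>0 satisfy (vacuously if l=0): for each 1≤q≤l every ball in G^q has radius r^q and r^q≤ε·r^{q−1}; for each 1≤q≤l the balls {(1/ε)B : B∈G^q} are pairwise disjoint and contained in B(c,s); and any two balls from {(1/ε)B : B∈G^1∪…∪G^l} are either disjoint or one is contained in the other. Then there exist a finite family G^{l+1} of open balls in ℝ^n and r^{l+1} with 0<r^{l+1}≤ε·r^l such that: every ball in G^{l+1} has radius r^{l+1}; the balls {(1/ε)B : B∈G^{l+1}}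 are pairwise disjoint and contained in B(c,s); any two balls from {(1/ε)B : B∈G^1∪…∪G^{l+1}} are either disjoint or one is contained in the other; and L^n(∪_{B∈G^{l+1}}B) ≥ (ε^n/2^{n+1})·L^n(B(c,s)∖∪_{B∈G^1∪…∪G^l}B). -/
open Set Metric MeasureTheory

noncomputable section

/-- The inductive construction step: given finite families `G^1, …, G^l` of
balls (each `G^q` given by a finite set of centres and a common radius `r q`) whose
`(1/ε)`-enlargements are disjoint, contained in `B(c, s)` and pairwise nested or disjoint,
there is a further family `G^{l+1}` of balls of a common radius `r' ≤ ε · r l` with the same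
properties covering at least an `ε^n / 2^{n+1}` proportion of the part of `B(c, s)` not yet
covered. -/
theorem inductive_ball_family_step (n : ℕ) (hn : 1 ≤ n) (c : Euc n) (s : ℝ) (hs : 0 < s)
    (ε : ℝ) (hε0 : 0 < ε) (hε1 : ε < 1) (l : ℕ)
    (G : ℕ → Finset (Euc n)) (r : ℕ → ℝ) (hr0 : 0 < r 0)
    (hrad : ∀ q, 1 ≤ q → q ≤ l → 0 < r q ∧ r q ≤ ε * r (q - 1))
    (hdisj : ∀ q, 1 ≤ q → q ≤ l → ∀ z ∈ G q,
      Metric.ball z (r q / ε) ⊆ Metric.ball c s ∧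
      ∀ z' ∈ G q, z ≠ z' → Metric.ball z (r q / ε) ∩ Metric.ball z' (r q / ε) = ∅)
    (hnest : ∀ q, 1 ≤ q → q ≤ l → ∀ q', 1 ≤ q' → q' ≤ l → ∀ z ∈ G q, ∀ z' ∈ G q',
      Metric.ball z (r q / ε) ∩ Metric.ball z' (r q' / ε) = ∅ ∨
      Metric.ball z (r q / ε) ⊆ Metric.ball z' (r q' / ε) ∨
      Metric.ball z' (r q' / ε) ⊆ Metric.ball z (r q / ε)) :
    ∃ (G' : Finset (Euc n)) (r' : ℝ), 0 < r' ∧ r' ≤ ε * r l ∧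
      (∀ z ∈ G', Metric.ball z (r' / ε) ⊆ Metric.ball c s ∧
        ∀ z' ∈ G', z ≠ z' → Metric.ball z (r' / ε) ∩ Metric.ball z' (r' / ε) = ∅) ∧
      (∀ q, 1 ≤ q → q ≤ l → ∀ z ∈ G q, ∀ z' ∈ G',
        Metric.ball z (r q / ε) ∩ Metric.ball z' (r' / ε) = ∅ ∨
        Metric.ball z (r q / ε) ⊆ Metric.ball z' (r' / ε) ∨
        Metric.ball z' (r' / ε) ⊆ Metric.ball z (r q / ε)) ∧
      ENNReal.ofReal (ε ^ n / 2 ^ (n + 1)) *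
          volume (Metric.ball c s \ ⋃ q ∈ Finset.Icc 1 l, ⋃ z ∈ G q, Metric.ball z (r q)) ≤
        volume (⋃ z ∈ G', Metric.ball z r') := by
  classical
  have hεne : ε ≠ 0 := ne_of_gt hε0
  haveI : Nontrivial (Euc n) :=
    Module.nontrivial_of_finrank_pos (R := ℝ) (by rw [finrank_euclideanSpace_fin]; omega)
  have hfr : Module.finrank ℝ (Euc n) = n := finrank_euclideanSpace_fin
  have hrl : 0 < r l := by
    rcases Nat.eq_zero_or_pos l with h | h
    · simpa [h] using hr0
    · exact (hrad l h le_rfl).1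
  set Old : Set (Euc n) := ⋃ q ∈ Finset.Icc 1 l, ⋃ z ∈ G q, Metric.ball z (r q) with hOldDef
  set U : Set (Euc n) := Metric.ball c s \ Old with hUDef
  have hUvol : volume U ≤ volume (Metric.ball c s) := measure_mono diff_subset
  have hUtop : volume U ≠ ⊤ := (lt_of_le_of_lt hUvol measure_ball_lt_top).ne
  -- the "good" sets
  set A : ℝ → Set (Euc n) := fun δ => {x | x ∈ U ∧ dist x c + δ ≤ s ∧
      ∀ q ∈ Finset.Icc 1 l, ∀ z ∈ G q,
        dist x z + δ ≤ r q / ε ∨ r q / ε + δ ≤ dist x z} with hADef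
  have hAmem : ∀ {δ : ℝ} {x : Euc n}, x ∈ A δ ↔ (x ∈ U ∧ dist x c + δ ≤ s ∧
      ∀ q ∈ Finset.Icc 1 l, ∀ z ∈ G q,
        dist x z + δ ≤ r q / ε ∨ r q / ε + δ ≤ dist x z) := fun {δ x} => Iff.rfl
  have hAmono : ∀ {δ δ' : ℝ}, δ' ≤ δ → A δ ⊆ A δ' := by
    intro δ δ' hle x hx
    rw [hAmem] at hx ⊢
    refine ⟨hx.1, by linarith [hx.2.1], ?_⟩
    intro q hq z hz
    rcases hx.2.2 q hq z hz with h | h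
    · exact Or.inl (by linarith)
    · exact Or.inr (by linarith)
  -- a.e. every point of U is good for some small δ
  have hcover : U ⊆ (⋃ k : ℕ, A (1 / ((k : ℝ) + 1))) ∪
      ⋃ q ∈ Finset.Icc 1 l, ⋃ z ∈ G q, Metric.sphere z (r q / ε) := by
    intro x hx
    by_cases hsph : x ∈ ⋃ q ∈ Finset.Icc 1 l, ⋃ z ∈ G q, Metric.sphere z (r q / ε)
    · exact Or.inr hsph
    left
    have hxball : dist x c < s := mem_ball.1 hx.1
    have hev : ∀ᶠ δ in nhdsWithin (0 : ℝ) (Set.Ioi 0),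
        dist x c + δ ≤ s ∧ ∀ q ∈ Finset.Icc 1 l, ∀ z ∈ G q,
          dist x z + δ ≤ r q / ε ∨ r q / ε + δ ≤ dist x z := by
      refine Filter.Eventually.and ?_ ?_
      · filter_upwards [Ioc_mem_nhdsGT_of_mem
          (Set.mem_Ico.2 ⟨le_rfl, sub_pos.2 hxball⟩)] with δ hδ
        linarith [hδ.2]
      · rw [Filter.eventually_all_finset]
        intro q hq
        rw [Filter.eventually_all_finset]
        intro z hz
        have hne : dist x z ≠ r q / ε := by
          intro h
          exact hsph (Set.mem_biUnion hq (Set.mem_biUnion hz (mem_sphere.2 h)))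
        rcases lt_or_gt_of_ne hne with h | h
        · filter_upwards [Ioc_mem_nhdsGT_of_mem
            (Set.mem_Ico.2 ⟨le_rfl, sub_pos.2 h⟩)] with δ hδ
          exact Or.inl (by linarith [hδ.2])
        · filter_upwards [Ioc_mem_nhdsGT_of_mem
            (Set.mem_Ico.2 ⟨le_rfl, sub_pos.2 h⟩)] with δ hδ
          exact Or.inr (by linarith [hδ.2])
    obtain ⟨δ, hδprop, hδpos⟩ := (hev.and eventually_mem_nhdsWithin).exists
    obtain ⟨k, hk⟩ := exists_nat_one_div_lt (Set.mem_Ioi.1 hδpos)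
    have hxA : x ∈ A δ := hAmem.2 ⟨hx, hδprop.1, hδprop.2⟩
    exact Set.mem_iUnion.2 ⟨k, hAmono hk.le hxA⟩
  have hSphNull : volume (⋃ q ∈ Finset.Icc 1 l, ⋃ z ∈ G q, Metric.sphere z (r q / ε)) = 0 := by
    rw [← Finset.set_biUnion_coe, measure_biUnion_null_iff (Finset.Icc 1 l).countable_toSet]
    intro q _
    rw [← Finset.set_biUnion_coe, measure_biUnion_null_iff (G q).countable_toSet]
    intro z _
    exact Measure.addHaar_sphere volume z _
  have hUA : volume U ≤ ⨆ k : ℕ, volume (A (1 / ((k : ℝ) + 1))) := by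
    have h1 : volume U ≤ volume (⋃ k : ℕ, A (1 / ((k : ℝ) + 1))) := by
      calc volume U ≤ volume ((⋃ k : ℕ, A (1 / ((k : ℝ) + 1))) ∪
            ⋃ q ∈ Finset.Icc 1 l, ⋃ z ∈ G q, Metric.sphere z (r q / ε)) := measure_mono hcover
        _ ≤ volume (⋃ k : ℕ, A (1 / ((k : ℝ) + 1))) +
            volume (⋃ q ∈ Finset.Icc 1 l, ⋃ z ∈ G q, Metric.sphere z (r q / ε)) :=
            measure_union_le _ _
        _ = volume (⋃ k : ℕ, A (1 / ((k : ℝ) + 1))) := by rw [hSphNull, add_zero]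
    have hmono : Monotone (fun k : ℕ => A (1 / ((k : ℝ) + 1))) := by
      intro k m hkm
      apply hAmono
      apply one_div_le_one_div_of_le (by positivity)
      exact_mod_cast Nat.succ_le_succ hkm
    rw [hmono.measure_iUnion] at h1
    exact h1
  have hK : ∃ k : ℕ, volume U ≤ 2 * volume (A (1 / ((k : ℝ) + 1))) := by
    by_cases h0 : volume U = 0
    · exact ⟨0, by simp [h0]⟩
    · have hhalf : volume U / 2 < volume U := ENNReal.half_lt_self h0 hUtop
      obtain ⟨k, hk⟩ := lt_iSup_iff.1 (lt_of_lt_of_le hhalf hUA)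
      refine ⟨k, ?_⟩
      have h2 : volume U < volume (A (1 / ((k : ℝ) + 1))) * 2 :=
        (ENNReal.div_lt_iff (Or.inl two_ne_zero) (Or.inl ENNReal.ofNat_ne_top)).1 hk
      rw [mul_comm] at h2
      exact h2.le
  obtain ⟨K, hKle⟩ := hK
  set δ : ℝ := 1 / ((K : ℝ) + 1) with hδDef
  have hδpos : 0 < δ := by positivity
  set t : ℝ := ε * min δ (r l) with htDef
  have hmin : 0 < min δ (r l) := lt_min hδpos hrl
  have htpos : 0 < t := mul_pos hε0 hmin
  have htdiv : t / ε = min δ (r l) := mul_div_cancel_left₀ _ hεne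
  have htdivpos : 0 < t / ε := by rw [htdiv]; exact hmin
  have htδ : t / ε ≤ δ := by rw [htdiv]; exact min_le_left _ _
  have htrl : t ≤ ε * r l := mul_le_mul_of_nonneg_left (min_le_right _ _) hε0.le
  -- separated sets: Zorn
  set S : Set (Set (Euc n)) :=
    {M | M ⊆ A δ ∧ M.Pairwise fun x y => 2 * (t / ε) ≤ dist x y} with hSDef
  have hzorn : ∃ M, Maximal (· ∈ S) M := by
    apply zorn_subset
    intro ch hch hchain
    refine ⟨⋃₀ ch, ⟨?_, ?_⟩, fun m hm => subset_sUnion_of_mem hm⟩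
    · exact sUnion_subset fun m hm => (hch hm).1
    · intro x hx y hy hxy
      obtain ⟨mx, hmx, hxmx⟩ := hx
      obtain ⟨my, hmy, hymy⟩ := hy
      rcases hchain.total hmx hmy with h | h
      · exact (hch hmy).2 (h hxmx) hymy hxy
      · exact (hch hmx).2 hxmx (h hymy) hxy
  obtain ⟨M, hMS, hMmax⟩ := hzorn
  have hMA : M ⊆ A δ := hMS.1
  have hMsep : M.Pairwise fun x y => 2 * (t / ε) ≤ dist x y := hMS.2
  -- enlarged balls around good points are inside B(c,s)
  have hballsub : ∀ x ∈ A δ, Metric.ball x (t / ε) ⊆ Metric.ball c s := by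
    intro x hx w hw
    have h1 : dist w x < t / ε := mem_ball.1 hw
    have h2 : dist x c + δ ≤ s := (hAmem.1 hx).2.1
    have h3 : dist w c ≤ dist w x + dist x c := dist_triangle w x c
    exact mem_ball.2 (by linarith)
  -- separated points have disjoint balls
  have hdisjball : ∀ x y : Euc n, 2 * (t / ε) ≤ dist x y → ∀ ρ : ℝ, ρ ≤ t / ε →
      Metric.ball x ρ ∩ Metric.ball y ρ = ∅ := by
    intro x y hxy ρ hρ
    rw [Set.eq_empty_iff_forall_notMem]
    rintro w ⟨hw1, hw2⟩
    have h1 : dist w x < ρ := mem_ball.1 hw1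
    have h2 : dist w y < ρ := mem_ball.1 hw2
    have h3 : dist x y ≤ dist x w + dist w y := dist_triangle x w y
    rw [dist_comm x w] at h3
    linarith
  -- M is finite
  have hMfin : M.Finite := by
    by_contra hinf
    have hinf : M.Infinite := hinf
    set v := volume (Metric.ball (0 : Euc n) (t / ε)) with hv
    have hv0 : v ≠ 0 := (measure_ball_pos volume _ htdivpos).ne'
    have hvtop : v ≠ ⊤ := measure_ball_lt_top.ne
    obtain ⟨N, hN⟩ := ENNReal.exists_nat_gt
      (ENNReal.div_lt_top measure_ball_lt_top.ne hv0).ne (r := volume (Metric.ball c s) / v)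
    obtain ⟨F, hFM, hFcard⟩ := hinf.exists_subset_card_eq (N + 1)
    have hdisjF : (↑F : Set (Euc n)).PairwiseDisjoint fun x => Metric.ball x (t / ε) := by
      intro x hx y hy hxy
      rw [Function.onFun, Set.disjoint_iff_inter_eq_empty]
      exact hdisjball x y (hMsep (hFM hx) (hFM hy) hxy) _ le_rfl
    have heach : ∀ x : Euc n, volume (Metric.ball x (t / ε)) = v := fun x =>
      Measure.addHaar_ball_center volume x _
    have hle : ((N + 1 : ℕ) : ENNReal) * v ≤ volume (Metric.ball c s) := by
      calc ((N + 1 : ℕ) : ENNReal) * v = ∑ x ∈ F, volume (Metric.ball x (t / ε)) := by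
            simp [heach, hFcard, Finset.sum_const, nsmul_eq_mul]
        _ = volume (⋃ x ∈ F, Metric.ball x (t / ε)) :=
            (measure_biUnion_finset hdisjF fun x _ => measurableSet_ball).symm
        _ ≤ volume (Metric.ball c s) :=
            measure_mono (Set.iUnion₂_subset fun x hx => hballsub x (hMA (hFM hx)))
    have hlt : volume (Metric.ball c s) < ((N + 1 : ℕ) : ENNReal) * v := by
      have h2 : volume (Metric.ball c s) / v < ((N + 1 : ℕ) : ENNReal) :=
        lt_trans hN (by exact_mod_cast Nat.lt_succ_self N)
      exact (ENNReal.div_lt_iff (Or.inl hv0) (Or.inl hvtop)).1 h2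
    exact absurd hle (not_le.2 hlt)
  set G' : Finset (Euc n) := hMfin.toFinset with hG'Def
  have hG'mem : ∀ x : Euc n, x ∈ G' ↔ x ∈ M := fun x => hMfin.mem_toFinset
  -- maximality gives covering of A δ by doubled balls
  have hAcov : A δ ⊆ ⋃ x ∈ G', Metric.ball x (2 * (t / ε)) := by
    intro y hy
    have hex : ∃ x ∈ M, dist y x < 2 * (t / ε) := by
      by_contra hcon
      push_neg at hcon
      have hyM : y ∉ M := by
        intro hyM
        have := hcon y hyM
        rw [dist_self] at this
        linarith
      have hins : insert y M ∈ S := by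
        constructor
        · exact Set.insert_subset_iff.2 ⟨hy, hMA⟩
        · intro a ha b hb hab
          rcases Set.mem_insert_iff.1 ha with rfl | ha'
          · rcases Set.mem_insert_iff.1 hb with rfl | hb'
            · exact absurd rfl hab
            · exact hcon b hb'
          · rcases Set.mem_insert_iff.1 hb with rfl | hb'
            · rw [dist_comm]; exact hcon a ha'
            · exact hMsep ha' hb' hab
      exact hyM (hMmax hins (Set.subset_insert y M) (Set.mem_insert y M))
    obtain ⟨x, hxM, hdx⟩ := hex
    exact Set.mem_iUnion₂.2 ⟨x, (hG'mem x).2 hxM, mem_ball.2 hdx⟩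
  set V1 := volume (Metric.ball (0 : Euc n) 1) with hV1
  have hVball : ∀ (x : Euc n) (ρ : ℝ), 0 ≤ ρ →
      volume (Metric.ball x ρ) = ENNReal.ofReal (ρ ^ n) * V1 := by
    intro x ρ hρ
    rw [Measure.addHaar_ball volume x hρ, hfr]
  have hvolA : volume (A δ) ≤
      (G'.card : ENNReal) * (ENNReal.ofReal ((2 * (t / ε)) ^ n) * V1) := by
    calc volume (A δ) ≤ volume (⋃ x ∈ G', Metric.ball x (2 * (t / ε))) := measure_mono hAcov
      _ ≤ ∑ x ∈ G', volume (Metric.ball x (2 * (t / ε))) := measure_biUnion_finset_le _ _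
      _ = (G'.card : ENNReal) * (ENNReal.ofReal ((2 * (t / ε)) ^ n) * V1) := by
          simp [hVball _ _ (by positivity : (0:ℝ) ≤ 2 * (t / ε)), Finset.sum_const, nsmul_eq_mul]
  have hvolnew : volume (⋃ x ∈ G', Metric.ball x t) =
      (G'.card : ENNReal) * (ENNReal.ofReal (t ^ n) * V1) := by
    have htle : t ≤ t / ε := by
      rw [le_div_iff₀ hε0]
      nlinarith
    have hdisjF : (↑G' : Set (Euc n)).PairwiseDisjoint fun x => Metric.ball x t := by
      intro x hx y hy hxy
      rw [Function.onFun, Set.disjoint_iff_inter_eq_empty]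
      exact hdisjball x y (hMsep ((hG'mem x).1 hx) ((hG'mem y).1 hy) hxy) t htle
    rw [measure_biUnion_finset hdisjF fun x _ => measurableSet_ball]
    simp [hVball _ _ htpos.le, Finset.sum_const, nsmul_eq_mul]
  have hfinal : ENNReal.ofReal (ε ^ n / 2 ^ (n + 1)) * volume U ≤
      volume (⋃ x ∈ G', Metric.ball x t) := by
    rw [hvolnew]
    calc ENNReal.ofReal (ε ^ n / 2 ^ (n + 1)) * volume U
        ≤ ENNReal.ofReal (ε ^ n / 2 ^ (n + 1)) * (2 * volume (A δ)) :=
          mul_le_mul_right hKle _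
      _ ≤ ENNReal.ofReal (ε ^ n / 2 ^ (n + 1)) *
          (2 * ((G'.card : ENNReal) * (ENNReal.ofReal ((2 * (t / ε)) ^ n) * V1))) :=
          mul_le_mul_right (mul_le_mul_right hvolA _) _
      _ = (ENNReal.ofReal (ε ^ n / 2 ^ (n + 1)) * 2 * ENNReal.ofReal ((2 * (t / ε)) ^ n)) *
          ((G'.card : ENNReal) * V1) := by ring
      _ = ENNReal.ofReal (t ^ n) * ((G'.card : ENNReal) * V1) := by
          congr 1
          rw [show (2 : ENNReal) = ENNReal.ofReal 2 by norm_num,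
            ← ENNReal.ofReal_mul (by positivity), ← ENNReal.ofReal_mul (by positivity)]
          congr 1
          rw [mul_pow, div_pow, pow_succ]
          field_simp
      _ = (G'.card : ENNReal) * (ENNReal.ofReal (t ^ n) * V1) := by ring
  refine ⟨G', t, htpos, htrl, ?_, ?_, hfinal⟩
  · intro z hz
    refine ⟨hballsub z (hMA ((hG'mem z).1 hz)), ?_⟩
    intro z' hz' hne
    exact hdisjball z z' (hMsep ((hG'mem z).1 hz) ((hG'mem z').1 hz') hne) _ le_rfl
  · intro q hq1 hq2 z hz x hx'
    have hxA : x ∈ A δ := hMA ((hG'mem x).1 hx')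
    rcases (hAmem.1 hxA).2.2 q (Finset.mem_Icc.2 ⟨hq1, hq2⟩) z hz with h | h
    · refine Or.inr (Or.inr ?_)
      intro w hw
      have h1 : dist w x < t / ε := mem_ball.1 hw
      have h2 : dist w z ≤ dist w x + dist x z := dist_triangle w x z
      exact mem_ball.2 (by linarith)
    · refine Or.inl ?_
      rw [Set.eq_empty_iff_forall_notMem]
      rintro w ⟨hw1, hw2⟩
      have h1 : dist w z < r q / ε := mem_ball.1 hw1
      have h2 : dist w x < t / ε := mem_ball.1 hw2
      have h3 : dist x z ≤ dist x w + dist w z := dist_triangle x w z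
      rw [dist_comm x w] at h3
      linarith

end
end

section
/- Let n≥1. There exists a constant C>0 depending only on n such that: for every ball B=B(x,t)⊂ℝ^n, every ε>0, every C^1 function g:B→ℝ with ‖∇g‖≤1 on B, and every affine function a:B→ℝ (so ∇a is constant) with ‖∇a‖≤1, if |g(y)−a(y)|≤εt for all y∈B, then |∫_B (‖∇g‖² − ‖∇a‖² − ‖∇(g−a)‖²) dL^n| ≤ C·ε·L^n(B). -/
open Set Metric MeasureTheory
open scoped RealInnerProductSpace

open Filter

noncomputable section

theorem functional_sq_identity (n : ℕ) (L : Euc n →L[ℝ] ℝ) (u : Euc n) :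
    ‖L‖ ^ 2 - ‖u‖ ^ 2 - ‖L - innerSL ℝ u‖ ^ 2 = 2 * ((L - innerSL ℝ u) u) := by
  set v := (InnerProductSpace.toDual ℝ (Euc n)).symm L with hv
  have hL : L = innerSL ℝ v := by
    ext y
    rw [← (InnerProductSpace.toDual ℝ (Euc n)).apply_symm_apply L]
    rw [InnerProductSpace.toDual_apply_apply, innerSL_apply_apply]
  have h1 : ‖L‖ = ‖v‖ := by rw [hL]; exact innerSL_apply_norm (𝕜 := ℝ) v
  have h2 : L - innerSL ℝ u = innerSL ℝ (v - u) := by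
    rw [hL]; ext y; rw [ContinuousLinearMap.sub_apply, innerSL_apply_apply, innerSL_apply_apply,
      innerSL_apply_apply, inner_sub_left]
  have h3 : ‖L - innerSL ℝ u‖ = ‖v - u‖ := by rw [h2]; exact innerSL_apply_norm (𝕜 := ℝ) _
  have h4 : (L - innerSL ℝ u) u = ⟪v - u, u⟫ := by rw [h2, innerSL_apply_apply]
  rw [h1, h3, h4, inner_sub_left, real_inner_self_eq_norm_sq, @norm_sub_sq_real,
    real_inner_comm]
  ring

/-- There is `C = C(n) > 0` such that for every ball `B = B(x, t) ⊆ ℝ^n`,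
every `C^1` function `g` with `|∇g| ≤ 1` on `B` and every affine `a(y) = ⟪u, y⟫ + b` with
`‖u‖ ≤ 1`, if `|g − a| ≤ ε t` on `B` then
`|∫_B (|∇g|² − |∇a|² − |∇(g − a)|²)| ≤ C ε L^n(B)`. -/
theorem flatten_area_comparison (n : ℕ) (hn : 1 ≤ n) :
    ∃ C : ℝ, 0 < C ∧ ∀ (x : Euc n) (t : ℝ), 0 < t → ∀ ε : ℝ, 0 < ε →
      ∀ g : Euc n → ℝ, ContDiffOn ℝ 1 g (Metric.ball x t) →
        (∀ y ∈ Metric.ball x t, ‖fderiv ℝ g y‖ ≤ 1) →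
        ∀ (u : Euc n) (b : ℝ), ‖u‖ ≤ 1 →
          (∀ y ∈ Metric.ball x t, |g y - (⟪u, y⟫ + b)| ≤ ε * t) →
          |∫ y in Metric.ball x t,
              (‖fderiv ℝ g y‖ ^ 2 - ‖u‖ ^ 2 -
                ‖fderiv ℝ (fun z => g z - (⟪u, z⟫ + b)) y‖ ^ 2)| ≤
            C * ε * (volume (Metric.ball x t)).toReal := by
  have hn' : (0 : ℝ) < n := by exact_mod_cast Nat.lt_of_lt_of_le Nat.zero_lt_one hn
  refine ⟨4 * n, by linarith, ?_⟩
  intro x t ht ε hε g hg hg1 u b hu hclose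
  haveI : Nontrivial (Euc n) :=
    Module.nontrivial_of_finrank_pos (R := ℝ) (by rw [finrank_euclideanSpace_fin]; omega)
  set B := Metric.ball x t with hB
  have hBmeas : MeasurableSet B := measurableSet_ball
  set c : ℝ := (volume (Metric.ball (0 : Euc n) 1)).toReal with hc
  have hcpos : 0 < c :=
    ENNReal.toReal_pos (measure_ball_pos _ _ one_pos).ne' measure_ball_lt_top.ne
  have hvol : ∀ (z : Euc n) (r : ℝ), 0 ≤ r →
      volume (Metric.ball z r) = ENNReal.ofReal (r ^ n) * volume (Metric.ball (0 : Euc n) 1) := by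
    intro z r hr
    simpa [finrank_euclideanSpace_fin] using Measure.addHaar_ball (volume : Measure (Euc n)) z hr
  have hvolR : ∀ (z : Euc n) (r : ℝ), 0 ≤ r →
      (volume (Metric.ball z r)).toReal = r ^ n * c := by
    intro z r hr
    rw [hvol z r hr, ENNReal.toReal_mul, ENNReal.toReal_ofReal (by positivity)]
  -- differentiability
  have hdiff : ∀ y ∈ B, DifferentiableAt ℝ g y := fun y hy =>
    ((hg.differentiableOn one_ne_zero) y hy).differentiableAt (isOpen_ball.mem_nhds hy)
  have hfd : ∀ y ∈ B, HasFDerivAt (fun z => g z - (⟪u, z⟫ + b))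
      (fderiv ℝ g y - innerSL ℝ u) y := by
    intro y hy
    have h2 : HasFDerivAt (fun z : Euc n => ⟪u, z⟫ + b) (innerSL ℝ u) y := by
      simpa using ((innerSL ℝ u).hasFDerivAt (x := y)).add_const b
    exact ((hdiff y hy).hasFDerivAt).sub h2
  have hpt : ∀ y ∈ B,
      (‖fderiv ℝ g y‖ ^ 2 - ‖u‖ ^ 2 -
          ‖fderiv ℝ (fun z => g z - (⟪u, z⟫ + b)) y‖ ^ 2)
        = 2 * ((fderiv ℝ (fun z => g z - (⟪u, z⟫ + b)) y) u) := by
    intro y hy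
    rw [(hfd y hy).fderiv]
    exact functional_sq_identity n (fderiv ℝ g y) u
  -- Lipschitz extension
  have hgl : LipschitzOnWith 1 g B := by
    refine (convex_ball x t).lipschitzOnWith_of_nnnorm_fderiv_le hdiff fun y hy => ?_
    rw [← NNReal.coe_le_coe, coe_nnnorm, NNReal.coe_one]
    exact hg1 y hy
  obtain ⟨G, hG, hGg⟩ := hgl.extend_real
  set F : Euc n → ℝ := fun z => G z - (⟪u, z⟫ + b) with hF
  have hFf : EqOn F (fun z => g z - (⟪u, z⟫ + b)) B := fun z hz => by
    simp only [hF, ← hGg hz]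
  have hFlip : ∀ z w, |F z - F w| ≤ 2 * dist z w := by
    intro z w
    have h1 : |G z - G w| ≤ dist z w := by
      have := hG.dist_le_mul z w
      rwa [Real.dist_eq, NNReal.coe_one, one_mul] at this
    have h2 : |⟪u, z⟫ - ⟪u, w⟫| ≤ dist z w := by
      rw [← inner_sub_right]
      calc |⟪u, z - w⟫| ≤ ‖u‖ * ‖z - w‖ := abs_real_inner_le_norm u (z - w)
        _ ≤ 1 * ‖z - w‖ := mul_le_mul_of_nonneg_right hu (norm_nonneg _)
        _ = dist z w := by rw [one_mul, dist_eq_norm]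
    calc |F z - F w| = |(G z - G w) - (⟪u, z⟫ - ⟪u, w⟫)| := by congr 1; simp [hF]; ring
      _ ≤ |G z - G w| + |⟪u, z⟫ - ⟪u, w⟫| := abs_sub _ _
      _ ≤ dist z w + dist z w := add_le_add h1 h2
      _ = 2 * dist z w := by ring
  have hFc : Continuous F :=
    hG.continuous.sub ((continuous_const.inner continuous_id).add continuous_const)
  have hFbd : ∀ y ∈ B, |F y| ≤ ε * t := fun y hy => by rw [hFf hy]; exact hclose y hy
  have hFint : ∀ (z : Euc n) (r : ℝ), IntegrableOn F (Metric.ball z r) := fun z r =>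
    (hFc.continuousOn.integrableOn_compact (isCompact_closedBall z r)).mono_set
      ball_subset_closedBall
  set I : ℝ := ∫ y in B, (fderiv ℝ (fun z => g z - (⟪u, z⟫ + b)) y) u with hI
  set Q : ℝ → ℝ := fun h => ∫ y in B, (F (y + h • u) - F y) / h with hQ
  set ψ : ℝ → ℝ := fun h => (ε * t + 2 * h) * (2 * c) * (((t + h) ^ n - t ^ n) / h) with hψ
  -- step (i): per-h bound
  have hQψ : ∀ h ∈ Ioi (0 : ℝ), |Q h| ≤ ψ h := by
    intro h hh
    rw [mem_Ioi] at hh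
    set B' := Metric.ball (x + h • u) t with hB'
    have hB'meas : MeasurableSet B' := measurableSet_ball
    have hshift : Continuous fun y : Euc n => F (y + h • u) :=
      hFc.comp (continuous_id.add continuous_const)
    have hint2 : IntegrableOn (fun y => F (y + h • u)) B :=
      (hshift.continuousOn.integrableOn_compact (isCompact_closedBall x t)).mono_set
        ball_subset_closedBall
    have htrans : (∫ y in B, F (y + h • u)) = ∫ z in B', F z := by
      have hmp := measurePreserving_add_right (volume : Measure (Euc n)) (h • u)
      have hme : MeasurableEmbedding fun y : Euc n => y + h • u :=
        (MeasurableEquiv.addRight (h • u)).measurableEmbedding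
      have him : (fun y : Euc n => y + h • u) '' B = B' := by
        ext z
        simp only [mem_image, hB, hB', mem_ball, dist_eq_norm]
        constructor
        · rintro ⟨y, hy, rfl⟩
          have : y + h • u - (x + h • u) = y - x := by abel
          rwa [this]
        · intro hz
          refine ⟨z - h • u, ?_, by abel⟩
          have : z - h • u - x = z - (x + h • u) := by abel
          rwa [this]
      rw [← him, hmp.setIntegral_image_emb hme]
    have hFnear : ∀ z ∈ B', |F z| ≤ ε * t + 2 * h := by
      intro z hz
      have hz' : z - h • u ∈ B := by
        rw [hB, mem_ball, dist_eq_norm]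
        have : z - h • u - x = z - (x + h • u) := by abel
        rw [this]
        rw [hB', mem_ball, dist_eq_norm] at hz
        exact hz
      have hd : dist z (z - h • u) ≤ h := by
        rw [dist_eq_norm, sub_sub_cancel, norm_smul, Real.norm_eq_abs, abs_of_pos hh]
        calc h * ‖u‖ ≤ h * 1 := mul_le_mul_of_nonneg_left hu hh.le
          _ = h := mul_one h
      calc |F z| = |F (z - h • u) + (F z - F (z - h • u))| := by congr 1; ring
        _ ≤ |F (z - h • u)| + |F z - F (z - h • u)| := abs_add_le _ _
        _ ≤ ε * t + 2 * dist z (z - h • u) := add_le_add (hFbd _ hz') (hFlip z (z - h • u))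
        _ ≤ ε * t + 2 * h := by linarith
    -- volume of the annulus
    have hΔ : ∀ z : Euc n,
        (volume (Metric.ball z (t + h) \ Metric.ball z t)).toReal = ((t + h) ^ n - t ^ n) * c := by
      intro z
      rw [measure_diff (ball_subset_ball (by linarith)) measurableSet_ball.nullMeasurableSet
        measure_ball_lt_top.ne]
      rw [ENNReal.toReal_sub_of_le (measure_mono (ball_subset_ball (by linarith)))
        measure_ball_lt_top.ne]
      rw [hvolR z (t + h) (by linarith), hvolR z t ht.le]
      ring
    have hsub1 : B' \ B ⊆ Metric.ball x (t + h) \ Metric.ball x t := by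
      rintro z ⟨hz1, hz2⟩
      refine ⟨?_, hz2⟩
      rw [mem_ball]
      calc dist z x ≤ dist z (x + h • u) + dist (x + h • u) x := dist_triangle _ _ _
        _ < t + dist (x + h • u) x := by
            rw [hB', mem_ball] at hz1; linarith
        _ ≤ t + h := by
            have : dist (x + h • u) x = h * ‖u‖ := by
              rw [dist_eq_norm, add_sub_cancel_left, norm_smul, Real.norm_eq_abs, abs_of_pos hh]
            rw [this]
            have : h * ‖u‖ ≤ h * 1 := mul_le_mul_of_nonneg_left hu hh.le
            linarith
    have hsub2 : B \ B' ⊆ Metric.ball (x + h • u) (t + h) \ Metric.ball (x + h • u) t := by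
      rintro z ⟨hz1, hz2⟩
      refine ⟨?_, hz2⟩
      rw [mem_ball]
      calc dist z (x + h • u) ≤ dist z x + dist x (x + h • u) := dist_triangle _ _ _
        _ < t + dist x (x + h • u) := by
            rw [hB, mem_ball] at hz1; linarith
        _ ≤ t + h := by
            have : dist x (x + h • u) = h * ‖u‖ := by
              rw [dist_comm, dist_eq_norm, add_sub_cancel_left, norm_smul, Real.norm_eq_abs,
                abs_of_pos hh]
            rw [this]
            have : h * ‖u‖ ≤ h * 1 := mul_le_mul_of_nonneg_left hu hh.le
            linarith
    have hann : ∀ z : Euc n, volume (Metric.ball z (t + h) \ Metric.ball z t) ≠ ⊤ :=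
      fun z => ((measure_mono diff_subset).trans_lt measure_ball_lt_top).ne
    have hm1 : (volume (B' \ B)).toReal ≤ ((t + h) ^ n - t ^ n) * c := by
      rw [← hΔ x]
      exact ENNReal.toReal_mono (hann x) (measure_mono hsub1)
    have hm2 : (volume (B \ B')).toReal ≤ ((t + h) ^ n - t ^ n) * c := by
      rw [← hΔ (x + h • u)]
      exact ENNReal.toReal_mono (hann _) (measure_mono hsub2)
    -- split the integrals
    have e1 : (∫ z in B' ∩ B, F z) + ∫ z in B' \ B, F z = ∫ z in B', F z :=
      integral_inter_add_diff hBmeas (hFint _ _)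
    have e2 : (∫ z in B ∩ B', F z) + ∫ z in B \ B', F z = ∫ z in B, F z :=
      integral_inter_add_diff hB'meas (hFint _ _)
    have hfin1 : volume (B' \ B) < ⊤ := (measure_mono diff_subset).trans_lt measure_ball_lt_top
    have hfin2 : volume (B \ B') < ⊤ := (measure_mono diff_subset).trans_lt measure_ball_lt_top
    have hb1 : |∫ z in B' \ B, F z| ≤ (ε * t + 2 * h) * (((t + h) ^ n - t ^ n) * c) := by
      rw [← Real.norm_eq_abs]
      refine (norm_setIntegral_le_of_norm_le_const hfin1
        (fun z hz => ?_)).trans (mul_le_mul_of_nonneg_left hm1 (by positivity))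
      rw [Real.norm_eq_abs]; exact hFnear z hz.1
    have hb2 : |∫ z in B \ B', F z| ≤ (ε * t + 2 * h) * (((t + h) ^ n - t ^ n) * c) := by
      rw [← Real.norm_eq_abs]
      refine (norm_setIntegral_le_of_norm_le_const hfin2
        (fun z hz => ?_)).trans (mul_le_mul_of_nonneg_left hm2 (by positivity))
      rw [Real.norm_eq_abs]
      calc |F z| ≤ ε * t := hFbd z hz.1
        _ ≤ ε * t + 2 * h := by linarith
    have hQh : Q h = ((∫ z in B' \ B, F z) - ∫ z in B \ B', F z) / h := by
      rw [hQ]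
      simp only []
      rw [integral_div, integral_sub hint2 (hFint x t), htrans]
      congr 1
      rw [← e1, ← e2, inter_comm B B']
      ring
    rw [hQh, hψ]
    simp only []
    rw [abs_div, abs_of_pos hh, div_le_iff₀ hh]
    calc |(∫ z in B' \ B, F z) - ∫ z in B \ B', F z|
        ≤ |∫ z in B' \ B, F z| + |∫ z in B \ B', F z| := abs_sub _ _
      _ ≤ (ε * t + 2 * h) * (((t + h) ^ n - t ^ n) * c)
            + (ε * t + 2 * h) * (((t + h) ^ n - t ^ n) * c) := add_le_add hb1 hb2
      _ = (ε * t + 2 * h) * (2 * c) * (((t + h) ^ n - t ^ n) / h) * h := by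
          field_simp
          ring
  -- step (ii): dominated convergence
  have hQtendsto : Tendsto Q (nhdsWithin (0:ℝ) (Ioi 0)) (nhds I) := by
    rw [hQ, hI]
    apply tendsto_integral_filter_of_dominated_convergence (bound := fun _ => (2:ℝ))
    · refine Eventually.of_forall fun h => ?_
      exact (((hFc.comp (continuous_id.add continuous_const)).sub hFc).div_const
        h).aestronglyMeasurable
    · refine eventually_mem_nhdsWithin.mono fun h hh => ?_
      rw [mem_Ioi] at hh
      refine ae_of_all _ fun y => ?_
      rw [Real.norm_eq_abs, abs_div, abs_of_pos hh, div_le_iff₀ hh]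
      calc |F (y + h • u) - F y| ≤ 2 * dist (y + h • u) y := hFlip _ _
        _ = 2 * (h * ‖u‖) := by
            rw [dist_eq_norm, add_sub_cancel_left, norm_smul, Real.norm_eq_abs, abs_of_pos hh]
        _ ≤ 2 * (h * 1) := by
            have := mul_le_mul_of_nonneg_left hu hh.le
            linarith
        _ = 2 * h := by ring
    · exact integrableOn_const measure_ball_lt_top.ne
    · refine (ae_restrict_iff' hBmeas).2 (ae_of_all _ fun y hy => ?_)
      have hFder : HasFDerivAt F (fderiv ℝ (fun z => g z - (⟪u, z⟫ + b)) y) y := by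
        rw [(hfd y hy).fderiv]
        exact (hfd y hy).congr_of_eventuallyEq
          (eventuallyEq_of_mem (isOpen_ball.mem_nhds hy) hFf)
      have hφ : HasDerivAt (fun h : ℝ => y + h • u) u 0 := by
        simpa using ((hasDerivAt_id (0:ℝ)).smul_const u).const_add y
      have h0 : y + (0:ℝ) • u = y := by simp
      have hFder' : HasFDerivAt F (fderiv ℝ (fun z => g z - (⟪u, z⟫ + b)) y) (y + (0:ℝ) • u) := by
        rw [h0]; exact hFder
      have hcomp := hFder'.comp_hasDerivAt 0 hφ
      have := hasDerivAt_iff_tendsto_slope.mp hcomp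
      refine (this.mono_left (nhdsWithin_mono _ fun h hh => ne_of_gt hh)).congr fun h => ?_
      simp [slope_def_field, Function.comp]
  -- step (iii): limit of ψ
  have hψlim : Tendsto ψ (nhdsWithin (0:ℝ) (Ioi 0))
      (nhds ((ε * t) * (2 * c) * ((n : ℝ) * t ^ (n - 1)))) := by
    have hq : HasDerivAt (fun s : ℝ => (t + s) ^ n) ((n : ℝ) * t ^ (n - 1)) 0 := by
      simpa using ((hasDerivAt_const (0:ℝ) t).add (hasDerivAt_id (0:ℝ))).fun_pow n
    have hslope := hasDerivAt_iff_tendsto_slope.mp hq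
    have h2 : Tendsto (fun h : ℝ => ((t + h) ^ n - t ^ n) / h) (nhdsWithin (0:ℝ) (Ioi 0))
        (nhds ((n : ℝ) * t ^ (n - 1))) := by
      refine (hslope.mono_left (nhdsWithin_mono _ fun h hh => ne_of_gt hh)).congr fun h => ?_
      simp [slope_def_field]
    have h1 : Tendsto (fun h : ℝ => (ε * t + 2 * h) * (2 * c)) (nhdsWithin (0:ℝ) (Ioi 0))
        (nhds ((ε * t) * (2 * c))) := by
      have : Continuous fun h : ℝ => (ε * t + 2 * h) * (2 * c) :=
        ((continuous_const.add (continuous_const.mul continuous_id)).mul continuous_const)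
      have hc1 := (this.tendsto 0).mono_left (nhdsWithin_le_nhds (s := Ioi (0:ℝ)))
      simpa using hc1
    have := h1.mul h2
    rw [hψ]
    exact this
  -- step (iv): |I| ≤ limit
  have hIbound : |I| ≤ (ε * t) * (2 * c) * ((n : ℝ) * t ^ (n - 1)) := by
    have habs : Tendsto (fun h => |Q h|) (nhdsWithin (0:ℝ) (Ioi 0)) (nhds |I|) := hQtendsto.abs
    exact le_of_tendsto_of_tendsto habs hψlim (eventually_mem_nhdsWithin.mono hQψ)
  -- step (v): conclude
  have hIeq : (∫ y in B,
      (‖fderiv ℝ g y‖ ^ 2 - ‖u‖ ^ 2 -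
        ‖fderiv ℝ (fun z => g z - (⟪u, z⟫ + b)) y‖ ^ 2)) = 2 * I := by
    rw [setIntegral_congr_fun hBmeas hpt, hI, integral_const_mul]
  rw [hIeq]
  have hpow : t ^ (n - 1) * t = t ^ n := by
    rw [← pow_succ]
    congr 1
    omega
  have hvolB : (volume B).toReal = t ^ n * c := hvolR x t ht.le
  rw [hvolB, abs_mul, abs_two]
  have : (4 : ℝ) * n * ε * (t ^ n * c) = 2 * ((ε * t) * (2 * c) * ((n : ℝ) * t ^ (n - 1))) := by
    rw [← hpow]
    ring
  rw [this]
  have h2 : (0:ℝ) ≤ 2 := by norm_num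
  exact mul_le_mul_of_nonneg_left hIbound h2


end
end

section
/- Let n≥1 and let η:ℝ^n→[0,∞) be a C^∞ function with support contained in the closed unit ball and ∫_{ℝ^n}η dL^n = 1; for ε>0 set η_ε(x)=ε^{−n}η(x/ε) and, for g defined on a ball, g^ε(x)=∫_{B(x,ε)}η_ε(x−y)g(y) dL^n(y). Then there exists C>0 (depending only on n and η) such that: for every ball B=B(x,t)⊂ℝ^n, every 0<ε<1/2, and every C^1 function g:B→ℝ with ‖∇g‖≤1 and |g|≤ε²t on B, one has ∫_{B(x,t−εt)} ‖∇(g^{εt})‖² dL^n ≤ C·ε²·L^n(B). -/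
set_option maxHeartbeats 1000000

open Set Metric MeasureTheory
open scoped Convolution

noncomputable section

/-- There is `C > 0` (depending only on `n` and the mollifier `η`) such
that: if `g` is `C^1` on `B = B(x, t)` with `|∇g| ≤ 1` and `|g| ≤ ε² t`, `0 < ε < 1/2`, then
the mollification at scale `ε t` satisfies `∫_{B(x, t − εt)} |∇(g^{εt})|² ≤ C ε² L^n(B)`. -/
theorem mollified_gradient_small (n : ℕ) (hn : 1 ≤ n) (η : Euc n → ℝ)
    (hη : ContDiff ℝ (⊤ : ℕ∞) η) (hη0 : ∀ x, 0 ≤ η x)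
    (hηs : Function.support η ⊆ Metric.closedBall 0 1) (hη1 : ∫ x, η x = 1) :
    ∃ C : ℝ, 0 < C ∧ ∀ (x : Euc n) (t ε : ℝ), 0 < t → 0 < ε → ε < 1 / 2 →
      ∀ g : Euc n → ℝ, ContDiffOn ℝ 1 g (Metric.ball x t) →
        (∀ y ∈ Metric.ball x t, ‖fderiv ℝ g y‖ ≤ 1) →
        (∀ y ∈ Metric.ball x t, |g y| ≤ ε ^ 2 * t) →
        (∫ y in Metric.ball x (t - ε * t),
            ‖fderiv ℝ (fun z => ∫ w in Metric.ball z (ε * t),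
                ((ε * t) ^ n)⁻¹ * η ((ε * t)⁻¹ • (z - w)) * g w) y‖ ^ 2) ≤
          C * ε ^ 2 * (volume (Metric.ball x t)).toReal := by
  haveI : Nontrivial (Euc n) := by
    apply Module.nontrivial_of_finrank_pos (R := ℝ)
    rw [finrank_euclideanSpace_fin]; omega
  set K := ∫ u : Euc n, ‖fderiv ℝ η u‖ with hKdef
  have hone : (1 : WithTop ℕ∞) ≤ ((⊤ : ℕ∞) : WithTop ℕ∞) := by exact_mod_cast le_top
  have hK0 : 0 ≤ K := integral_nonneg fun u => norm_nonneg _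
  refine ⟨(K + 1) ^ 2, by positivity, ?_⟩
  intro x t ε ht hε hε2 g hg hg1 hg2
  set δ := ε * t with hδdef
  have hδ : 0 < δ := mul_pos hε ht
  have hδt : δ < t := by nlinarith
  have hε2t : 0 ≤ ε ^ 2 * t := by positivity
  set ηδ : Euc n → ℝ := fun z => (δ ^ n)⁻¹ * η (δ⁻¹ • z) with hηδdef
  have hηδ_smooth : ContDiff ℝ (⊤ : ℕ∞) ηδ :=
    contDiff_const.mul (hη.comp (contDiff_id.const_smul δ⁻¹))
  have hηδ_supp : ∀ z : Euc n, δ < ‖z‖ → ηδ z = 0 := by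
    intro z hz
    have hz0 : η (δ⁻¹ • z) = 0 := by
      by_contra h
      have h1 := hηs (Function.mem_support.2 h)
      rw [mem_closedBall, dist_zero_right, norm_smul, norm_inv, Real.norm_eq_abs,
        abs_of_pos hδ] at h1
      have : ‖z‖ ≤ δ := by
        rw [← one_mul δ]
        calc ‖z‖ = δ * (δ⁻¹ * ‖z‖) := by field_simp
        _ ≤ δ * 1 := by nlinarith
        _ = 1 * δ := by ring
      linarith
    simp [hηδdef, hz0]
  have hηδ_cs : HasCompactSupport ηδ := by
    apply HasCompactSupport.intro (isCompact_closedBall (0 : Euc n) δ)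
    intro z hz
    rw [mem_closedBall, dist_zero_right, not_le] at hz
    exact hηδ_supp z hz
  -- truncated g
  set gb : Euc n → ℝ := (ball x t).indicator g with hgbdef
  have hgb_bd : ∀ w, ‖gb w‖ ≤ ε ^ 2 * t := by
    intro w
    rw [hgbdef]
    by_cases hw : w ∈ ball x t
    · rw [indicator_of_mem hw, Real.norm_eq_abs]; exact hg2 w hw
    · rw [indicator_of_notMem hw, norm_zero]; exact hε2t
  have hgb_int : Integrable gb := by
    have hio : IntegrableOn g (ball x t) := by
      refine ⟨hg.continuousOn.aestronglyMeasurable measurableSet_ball, ?_⟩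
      apply HasFiniteIntegral.restrict_of_bounded (C := ε ^ 2 * t) measure_ball_lt_top
      filter_upwards [ae_restrict_mem measurableSet_ball] with y hy
      rw [Real.norm_eq_abs]; exact hg2 y hy
    exact hio.integrable_indicator measurableSet_ball
  set L := ContinuousLinearMap.mul ℝ ℝ with hLdef
  set L' := L.precompR (Euc n) with hL'def
  -- the given function agrees with the convolution on the small ball
  have key : ∀ z ∈ ball x (t - δ),
      (∫ w in ball z δ, (δ ^ n)⁻¹ * η (δ⁻¹ • (z - w)) * g w) = (gb ⋆[L] ηδ) z := by
    intro z hz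
    have hsub : ball z δ ⊆ ball x t := by
      apply ball_subset_ball'
      rw [mem_ball] at hz; linarith
    rw [convolution_def]
    have h1 : ∫ w, L (gb w) (ηδ (z - w)) = ∫ w in closedBall z δ, L (gb w) (ηδ (z - w)) := by
      rw [setIntegral_eq_integral_of_forall_compl_eq_zero]
      intro w hw
      rw [mem_closedBall, not_le] at hw
      have : δ < ‖z - w‖ := by rw [← dist_eq_norm, dist_comm]; exact hw
      rw [hηδ_supp _ this]
      simp
    have h2 : (closedBall z δ : Set (Euc n)) =ᵐ[volume] ball z δ := by
      rw [ae_eq_set]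
      constructor
      · apply measure_mono_null (t := sphere z δ)
        · intro w hw
          simp only [mem_diff, mem_closedBall, mem_ball, not_lt] at hw
          exact le_antisymm hw.1 hw.2
        · exact Measure.addHaar_sphere volume z δ
      · apply measure_mono_null (t := (∅ : Set (Euc n)))
        · intro w hw; exact absurd (ball_subset_closedBall hw.1) hw.2
        · simp
    rw [h1, setIntegral_congr_set h2]
    apply setIntegral_congr_fun measurableSet_ball
    intro w hw
    have : gb w = g w := indicator_of_mem (hsub hw) g
    simp only [hLdef, ContinuousLinearMap.mul_apply', this]
    ring
  -- derivative of the scaled mollifier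
  have hfd : ∀ u : Euc n, fderiv ℝ ηδ u = ((δ ^ n)⁻¹ * δ⁻¹) • fderiv ℝ η (δ⁻¹ • u) := by
    intro u
    have h1 : HasFDerivAt (fun z : Euc n => δ⁻¹ • z)
        (δ⁻¹ • ContinuousLinearMap.id ℝ (Euc n)) u := (hasFDerivAt_id u).const_smul δ⁻¹
    have h2 : HasFDerivAt η (fderiv ℝ η (δ⁻¹ • u)) (δ⁻¹ • u) :=
      (hη.differentiable (by simp)).differentiableAt.hasFDerivAt
    have h3 := (h2.comp u h1).const_mul ((δ ^ n)⁻¹)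
    have h4 : (fderiv ℝ η (δ⁻¹ • u)).comp (δ⁻¹ • ContinuousLinearMap.id ℝ (Euc n))
        = δ⁻¹ • fderiv ℝ η (δ⁻¹ • u) := by
      ext v; simp
    rw [h4] at h3
    have := h3.fderiv
    rwa [smul_smul] at this
  have hnormfd : ∀ u : Euc n, ‖fderiv ℝ ηδ u‖
      = ((δ ^ n)⁻¹ * δ⁻¹) * ‖fderiv ℝ η (δ⁻¹ • u)‖ := by
    intro u
    rw [hfd u, norm_smul, Real.norm_eq_abs, abs_of_pos (by positivity)]
  have hintfd : ∫ u : Euc n, ‖fderiv ℝ ηδ u‖ = δ⁻¹ * K := by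
    simp_rw [hnormfd]
    rw [integral_const_mul]
    rw [Measure.integral_comp_inv_smul_of_nonneg volume (fun u => ‖fderiv ℝ η u‖) hδ.le]
    rw [finrank_euclideanSpace_fin, smul_eq_mul, ← hKdef]
    have hδn : (δ : ℝ) ^ n ≠ 0 := by positivity
    field_simp
  -- integrability of the derivative factor
  have hDcont : Continuous (fderiv ℝ ηδ) := hηδ_smooth.continuous_fderiv (by simp)
  have hDcs : HasCompactSupport (fderiv ℝ ηδ) := hηδ_cs.fderiv (𝕜 := ℝ)
  -- pointwise bound on the convolution derivative
  have hconvbd : ∀ y : Euc n, ‖(gb ⋆[L'] fderiv ℝ ηδ) y‖ ≤ ε * K := by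
    intro y
    have hInt : Integrable (fun w : Euc n => ε ^ 2 * t * ‖fderiv ℝ ηδ (y - w)‖) := by
      apply Integrable.const_mul
      apply Continuous.integrable_of_hasCompactSupport
      · exact (hDcont.comp (continuous_const.sub continuous_id)).norm
      · exact ((hDcs.comp_homeomorph (Homeomorph.subLeft y)).norm)
    calc ‖(gb ⋆[L'] fderiv ℝ ηδ) y‖ ≤ ∫ w, ‖(L' (gb w)) (fderiv ℝ ηδ (y - w))‖ := by
          rw [convolution_def]; exact norm_integral_le_integral_norm _
      _ ≤ ∫ w, ε ^ 2 * t * ‖fderiv ℝ ηδ (y - w)‖ := by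
          apply integral_mono_of_nonneg (Filter.Eventually.of_forall fun w => norm_nonneg _) hInt
          apply Filter.Eventually.of_forall
          intro w
          calc ‖(L' (gb w)) (fderiv ℝ ηδ (y - w))‖
              ≤ 1 * ‖gb w‖ * ‖fderiv ℝ ηδ (y - w)‖ := by
                rw [one_mul, ← norm_smul]; apply le_of_eq; congr 1
            _ ≤ 1 * (ε ^ 2 * t) * ‖fderiv ℝ ηδ (y - w)‖ := by
                apply mul_le_mul_of_nonneg_right _ (norm_nonneg _)
                apply mul_le_mul _ (hgb_bd w) (norm_nonneg _) zero_le_one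
                exact le_rfl
            _ = ε ^ 2 * t * ‖fderiv ℝ ηδ (y - w)‖ := by ring
      _ = ε ^ 2 * t * ∫ w, ‖fderiv ℝ ηδ (y - w)‖ := integral_const_mul _ _
      _ = ε ^ 2 * t * ∫ u, ‖fderiv ℝ ηδ u‖ := by
          rw [integral_sub_left_eq_self (fun u => ‖fderiv ℝ ηδ u‖) volume y]
      _ = ε ^ 2 * t * (δ⁻¹ * K) := by rw [hintfd]
      _ = ε * K := by rw [hδdef]; field_simp
  -- derivative identity on the small ball
  have hderiv : ∀ y ∈ ball x (t - δ),
      fderiv ℝ (fun z => ∫ w in ball z δ, (δ ^ n)⁻¹ * η (δ⁻¹ • (z - w)) * g w) y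
        = (gb ⋆[L'] fderiv ℝ ηδ) y := by
    intro y hy
    have h1 := hηδ_cs.hasFDerivAt_convolution_right L hgb_int.locallyIntegrable
      (hηδ_smooth.of_le hone) y
    have h2 : (fun z => ∫ w in ball z δ, (δ ^ n)⁻¹ * η (δ⁻¹ • (z - w)) * g w)
        =ᶠ[nhds y] (gb ⋆[L] ηδ) := by
      filter_upwards [isOpen_ball.mem_nhds hy] with z hz
      exact key z hz
    rw [h2.fderiv_eq, h1.fderiv]
  -- final estimate
  have hball_lt : volume (ball x (t - δ)) < ⊤ := measure_ball_lt_top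
  have hmain : (∫ y in ball x (t - δ),
      ‖fderiv ℝ (fun z => ∫ w in ball z δ, (δ ^ n)⁻¹ * η (δ⁻¹ • (z - w)) * g w) y‖ ^ 2)
      ≤ (ε * K) ^ 2 * (volume (ball x (t - δ))).toReal := by
    have := norm_setIntegral_le_of_norm_le_const (μ := volume) hball_lt
      (f := fun y => ‖fderiv ℝ (fun z => ∫ w in ball z δ,
        (δ ^ n)⁻¹ * η (δ⁻¹ • (z - w)) * g w) y‖ ^ 2)
      (C := (ε * K) ^ 2) ?_
    · exact le_trans (le_abs_self _) ((Real.norm_eq_abs _) ▸ this)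
    · intro y hy
      rw [Real.norm_eq_abs, abs_of_nonneg (by positivity)]
      have h := hconvbd y
      rw [← hderiv y hy] at h
      have h0 : (0:ℝ) ≤ ε * K := by positivity
      nlinarith [norm_nonneg (fderiv ℝ (fun z => ∫ w in ball z δ,
        (δ ^ n)⁻¹ * η (δ⁻¹ • (z - w)) * g w) y)]
  calc (∫ y in ball x (t - δ),
      ‖fderiv ℝ (fun z => ∫ w in ball z δ, (δ ^ n)⁻¹ * η (δ⁻¹ • (z - w)) * g w) y‖ ^ 2)
      ≤ (ε * K) ^ 2 * (volume (ball x (t - δ))).toReal := hmain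
    _ ≤ (K + 1) ^ 2 * ε ^ 2 * (volume (ball x t)).toReal := by
        apply mul_le_mul
        · nlinarith
        · exact ENNReal.toReal_mono measure_ball_lt_top.ne
            (measure_mono (ball_subset_ball (by linarith)))
        · exact ENNReal.toReal_nonneg
        · positivity
    
end
end

section
/- Let X be a real normed space, m≥1, and let T:X→ℝ^m be a continuous (bounded) linear surjection. If P⊂ℝ^m is directionally porous, then T^{−1}(P) is directionally porous in X. -/
open Set Metric MeasureTheory

noncomputable section

set_option maxHeartbeats 1000000 in
/-- The preimage of a directionally porous subset of `ℝ^m` under a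
continuous linear surjection is directionally porous. -/
theorem dirPorous_preimage_of_continuousLinearSurjection
    (X : Type*) [NormedAddCommGroup X] [NormedSpace ℝ X] (m : ℕ) (hm : 1 ≤ m)
    (T : X →L[ℝ] Euc m) (hT : Function.Surjective T)
    (P : Set (Euc m)) (hP : DirPorous P) :
    DirPorous (T ⁻¹' P) := by
  obtain ⟨ρ, hρ0, hρ1, hholes⟩ := hP
  -- a continuous linear right inverse
  obtain ⟨S, hS⟩ := (T : X →ₗ[ℝ] Euc m).exists_rightInverse_of_surjective
    (LinearMap.range_eq_top.mpr hT)
  set S' : Euc m →L[ℝ] X := LinearMap.toContinuousLinearMap S with hS'def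
  have hTS : ∀ y : Euc m, T (S' y) = y := by
    intro y
    have := LinearMap.congr_fun hS y
    simpa [hS'def] using this
  set C : ℝ := (‖T‖ + 1) * (‖S'‖ + 1) with hCdef
  have hC1 : (1 : ℝ) ≤ C := by
    have h1 : (1:ℝ) ≤ ‖T‖ + 1 := by linarith [norm_nonneg T]
    have h2 : (1:ℝ) ≤ ‖S'‖ + 1 := by linarith [norm_nonneg S']
    calc (1:ℝ) = 1 * 1 := by ring
    _ ≤ C := mul_le_mul h1 h2 one_pos.le (by positivity)
  have hC0 : 0 < C := lt_of_lt_of_le one_pos hC1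
  set ρ' : ℝ := ρ / (2 * C) with hρ'def
  have hρ'0 : 0 < ρ' := by positivity
  have hρ'1 : ρ' < 1 := by
    have : ρ' ≤ ρ / 2 := by
      apply div_le_div_of_nonneg_left hρ0.le (by positivity)
      nlinarith
    linarith
  refine ⟨ρ', hρ'0, hρ'1, ?_⟩
  intro x hx
  obtain ⟨v, hv1, hv⟩ := hholes (T x) hx
  set w : X := S' v with hwdef
  have hTw : T w = v := hTS v
  have hw0 : w ≠ 0 := by
    intro h
    rw [h, map_zero] at hTw
    rw [← hTw, norm_zero] at hv1
    norm_num at hv1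
  have hwpos : 0 < ‖w‖ := norm_pos_iff.mpr hw0
  have hwC : ‖w‖ ≤ ‖S'‖ := by
    have := S'.le_opNorm v
    rwa [hv1, mul_one] at this
  set u : X := ‖w‖⁻¹ • w with hudef
  have hu1 : ‖u‖ = 1 := by
    rw [hudef, norm_smul, norm_inv, norm_norm]
    field_simp
  refine ⟨u, hu1, ?_⟩
  intro δ hδ
  obtain ⟨t, ht0, htδ, hball⟩ := hv (δ / ‖w‖) (by positivity)
  refine ⟨t * ‖w‖, mul_ne_zero ht0 hwpos.ne', ?_, ?_⟩
  · rw [abs_mul, abs_of_pos hwpos]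
    calc |t| * ‖w‖ < (δ / ‖w‖) * ‖w‖ := by
          exact mul_lt_mul_of_pos_right htδ hwpos
    _ = δ := by field_simp
  · ext y
    simp only [Set.mem_inter_iff, Metric.mem_ball, Set.mem_preimage, Set.mem_empty_iff_false,
      iff_false, not_and]
    intro hyb hyP
    have hTy : T y ∈ Metric.ball (T x + t • v) (ρ * |t|) := by
      have hz : T (x + (t * ‖w‖) • u) = T x + t • v := by
        have hsu : ((t * ‖w‖) • u : X) = t • w := by
          rw [hudef, smul_smul]
          congr 1
          field_simp
        rw [map_add, hsu, T.map_smul, hTw]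
      rw [Metric.mem_ball, dist_eq_norm, ← hz, ← map_sub]
      have hb1 : ‖y - (x + (t * ‖w‖) • u)‖ < ρ' * |t * ‖w‖| := by
        rwa [dist_eq_norm] at hyb
      have hb2 : ‖T (y - (x + (t * ‖w‖) • u))‖ ≤ ‖T‖ * (ρ' * |t * ‖w‖|) :=
        le_trans (T.le_opNorm _) (mul_le_mul_of_nonneg_left hb1.le (norm_nonneg T))
      have habs : |t * ‖w‖| = |t| * ‖w‖ := by rw [abs_mul, abs_of_pos hwpos]
      have hkey : ‖T‖ * (ρ' * |t * ‖w‖|) < ρ * |t| := by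
        rw [habs, hρ'def]
        have htpos : 0 < |t| := abs_pos.mpr ht0
        have h1 : ‖T‖ * ‖w‖ ≤ C := by
          calc ‖T‖ * ‖w‖ ≤ (‖T‖ + 1) * (‖S'‖ + 1) := by nlinarith [norm_nonneg T]
          _ = C := rfl
        have h2 : ‖T‖ * (ρ / (2 * C) * (|t| * ‖w‖)) = (‖T‖ * ‖w‖) * (ρ / (2 * C)) * |t| := by
          ring
        rw [h2]
        have h3 : (‖T‖ * ‖w‖) * (ρ / (2 * C)) ≤ C * (ρ / (2 * C)) :=
          mul_le_mul_of_nonneg_right h1 (by positivity)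
        have h4 : C * (ρ / (2 * C)) = ρ / 2 := by field_simp
        have h5 : (‖T‖ * ‖w‖) * (ρ / (2 * C)) * |t| ≤ (ρ / 2) * |t| := by
          rw [← h4]; exact mul_le_mul_of_nonneg_right h3 htpos.le
        have h6 : (ρ / 2) * |t| < ρ * |t| :=
          mul_lt_mul_of_pos_right (by linarith) htpos
        linarith
      exact lt_of_le_of_lt hb2 hkey
    have : T y ∈ Metric.ball (T x + t • v) (ρ * |t|) ∩ P := ⟨hTy, hyP⟩
    rw [hball] at this
    exact this

end
end
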